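/- arXiv:2310.06745 — 4 statements merged into one kernel-verified Lean document; each statement's English description precedes it below -/
import Mathlib

section
/- Let κ ≥ 2, let d ∈ D, and let γ ∈ Γ_κ(d). Then γ ⪯ diag(d), i.e., the matrix diag(d) − γ is positive semidefinite. -/
open Matrix

/-- For `κ ≥ 2`, `d` in the unit simplex `D`, and `γ ∈ Γ_κ(d)`
(symmetric positive semidefinite, entries in `[0,1]`, row sums `d`),
the matrix `diag(d) − γ` is positive semidefinite. -/
theorem stmt0 (κ : ℕ) (hκ : 2 ≤ κ) (d : Fin κ → ℝ)
    (hd0 : ∀ k, 0 ≤ d k) (hd1 : ∀ k, d k ≤ 1) (hdsum : ∑ k, d k = 1)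
    (γ : Matrix (Fin κ) (Fin κ) ℝ)
    (hγsym : γ.IsSymm) (hγpsd : γ.PosSemidef)
    (hγ0 : ∀ k k', 0 ≤ γ k k') (hγ1 : ∀ k k', γ k k' ≤ 1)
    (hrow : ∀ k, ∑ k', γ k k' = d k) :
    (Matrix.diagonal d - γ).PosSemidef := by
  have hsym : ∀ k k', γ k k' = γ k' k := fun k k' => by
    have := congrFun (congrFun hγsym k') k
    simpa [Matrix.transpose_apply] using this
  rw [Matrix.posSemidef_iff_dotProduct_mulVec]
  constructor
  · have hs : (Matrix.diagonal d - γ).IsSymm := (Matrix.isSymm_diagonal d).sub hγsym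
    rw [Matrix.IsHermitian, Matrix.conjTranspose_eq_transpose_of_trivial]
    exact hs
  · intro x
    rw [star_trivial]
    have hL : ∀ k, x k * ((Matrix.diagonal d - γ) *ᵥ x) k
        = ∑ k', (γ k k' * x k ^ 2 - γ k k' * (x k * x k')) := by
      intro k
      have hv : ((Matrix.diagonal d - γ) *ᵥ x) k = d k * x k - ∑ k', γ k k' * x k' := by
        simp [Matrix.mulVec, dotProduct, Matrix.diagonal, sub_mul,
          Finset.sum_sub_distrib, Finset.sum_ite_eq, ite_mul]
      rw [hv, ← hrow k, Finset.sum_mul, mul_sub, Finset.mul_sum, Finset.mul_sum, ← Finset.sum_sub_distrib]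
      apply Finset.sum_congr rfl
      intro k' _
      ring
    have hdot : x ⬝ᵥ ((Matrix.diagonal d - γ) *ᵥ x)
        = ∑ k, ∑ k', (γ k k' * x k ^ 2 - γ k k' * (x k * x k')) := by
      simp only [dotProduct]
      exact Finset.sum_congr rfl fun k _ => hL k
    have key : ∑ k, ∑ k', γ k k' * (x k - x k') ^ 2
        = 2 * ∑ k, ∑ k', (γ k k' * x k ^ 2 - γ k k' * (x k * x k')) := by
      have h1 : ∀ k k', γ k k' * (x k - x k') ^ 2
          = (γ k k' * x k ^ 2 - γ k k' * (x k * x k'))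
            + (γ k k' * x k' ^ 2 - γ k k' * (x k * x k')) := fun k k' => by ring
      simp_rw [h1, Finset.sum_add_distrib]
      have h2 : ∑ k, ∑ k', (γ k k' * x k' ^ 2 - γ k k' * (x k * x k'))
          = ∑ k, ∑ k', (γ k k' * x k ^ 2 - γ k k' * (x k * x k')) := by
        rw [Finset.sum_comm]
        refine Finset.sum_congr rfl fun k _ => Finset.sum_congr rfl fun k' _ => ?_
        rw [hsym]
        ring
      rw [h2]
      ring
    have hnn : 0 ≤ ∑ k, ∑ k', γ k k' * (x k - x k') ^ 2 :=
      Finset.sum_nonneg fun k _ => Finset.sum_nonneg fun k' _ =>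
        mul_nonneg (hγ0 k k') (sq_nonneg _)
    rw [hdot]
    nlinarith [key, hnn]
end

section
/- For every θ ∈ Θ, all integers N ≥ 1 and n ≥ 1, arbitrary matrices σ¹, …, σⁿ ∈ ℝ^{κ×N}, and arbitrary vectors u¹, …, uⁿ ∈ ℝ^κ, one has Σ_{ℓ,ℓ'=1}^n ⟨∇ξ_θ(σ^ℓ (σ^{ℓ'})ᵀ / N) u^{ℓ'}, u^ℓ⟩ ≥ 0. (This is the positive semidefiniteness of the matrix-valued covariance kernel of the ℝ^κ-valued Gaussian process Z_{N,θ} with E[Z_{N,θ}(σ) Z_{N,θ}(σ')ᵀ] = ∇ξ_θ(σσ'ᵀ/N).) -/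
open Matrix

/-- Square real matrices of size `κ`. -/
abbrev Mat (κ : ℕ) := Matrix (Fin κ) (Fin κ) ℝ

/-- An element `θ = (p, m, n₁, …, n_m, w₁, …, w_m)` of the parameter set `Θ`:
`p, m, n₁, …, n_m` are positive integers and `w₁, …, w_m ∈ [−1,1]^κ`. -/
structure SpinParam (κ : ℕ) where
  p : ℕ
  m : ℕ
  n : Fin m → ℕ
  w : Fin m → Fin κ → ℝ
  p_pos : 0 < p
  m_pos : 0 < m
  n_pos : ∀ j, 0 < n j
  w_bdd : ∀ j k, |w j k| ≤ 1

/-- `deg(θ) = p (n₁ + ⋯ + n_m)`. -/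
def SpinParam.deg {κ : ℕ} (θ : SpinParam κ) : ℕ := θ.p * ∑ j, θ.n j

/-- `p`-th entrywise (Hadamard) power of a matrix; `hadPow R 0` is the all-ones matrix. -/
def hadPow {κ : ℕ} (R : Mat κ) (p : ℕ) : Mat κ := Matrix.of fun k k' => R k k' ^ p

/-- `⟨R w, w⟩ = ∑_{k,k'} R_{k,k'} w_{k'} w_k`. -/
def quadForm {κ : ℕ} (R : Mat κ) (w : Fin κ → ℝ) : ℝ := ∑ k, ∑ k', R k k' * w k' * w k

/-- `ξ_θ(R) = ∏_j ⟨R^{∘p} w_j, w_j⟩^{n_j}`. -/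
def xiTheta {κ : ℕ} (θ : SpinParam κ) (R : Mat κ) : ℝ :=
  ∏ j, quadForm (hadPow R θ.p) (θ.w j) ^ θ.n j

/-- The matrix of partial derivatives `(∂f/∂R_{k,k'})(R)` of a function of a matrix. -/
noncomputable def gradMat {κ : ℕ} (f : Mat κ → ℝ) (R : Mat κ) : Mat κ :=
  Matrix.of fun k k' =>
    deriv (fun t : ℝ => f (R + t • Matrix.single k k' (1 : ℝ))) 0

/-- `∇ξ_θ`. -/
noncomputable def gradXi {κ : ℕ} (θ : SpinParam κ) : Mat κ → Mat κ := gradMat (xiTheta θ)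

/-- `⟨A, B⟩ = tr(AᵀB) = ∑_{k,k'} A_{k,k'} B_{k,k'}`. -/
def matInner {κ : ℕ} (A B : Mat κ) : ℝ := ∑ k, ∑ k', A k k' * B k k'

/-- `ϑ_θ(R) = ⟨R, ∇ξ_θ(R)⟩ − ξ_θ(R)`. -/
noncomputable def varthetaTheta {κ : ℕ} (θ : SpinParam κ) (R : Mat κ) : ℝ :=
  matInner R (gradXi θ R) - xiTheta θ R

/-- `‖R‖₁ = ∑_{k,k'} |R_{k,k'}|`. -/
def l1norm {κ : ℕ} (R : Mat κ) : ℝ := ∑ k, ∑ k', |R k k'|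

section GramAux

/-- A kernel is a Gram kernel if it arises from inner products of vectors. -/
def IsGram {n : ℕ} (K : Fin n → Fin n → ℝ) : Prop :=
  ∃ (ι : Type) (_ : Fintype ι) (v : Fin n → ι → ℝ), ∀ ℓ ℓ', K ℓ ℓ' = ∑ i, v ℓ i * v ℓ' i

lemma IsGram.congr {n : ℕ} {K K' : Fin n → Fin n → ℝ} (h : IsGram K)
    (he : ∀ ℓ ℓ', K ℓ ℓ' = K' ℓ ℓ') : IsGram K' := by
  obtain ⟨ι, _, v, hv⟩ := h
  exact ⟨ι, ‹_›, v, fun ℓ ℓ' => (he ℓ ℓ') ▸ hv ℓ ℓ'⟩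

lemma IsGram.mul {n : ℕ} {K L : Fin n → Fin n → ℝ} (hK : IsGram K) (hL : IsGram L) :
    IsGram (fun ℓ ℓ' => K ℓ ℓ' * L ℓ ℓ') := by
  obtain ⟨ι, _, v, hv⟩ := hK
  obtain ⟨ι', _, v', hv'⟩ := hL
  refine ⟨ι × ι', inferInstance, fun ℓ i => v ℓ i.1 * v' ℓ i.2, fun ℓ ℓ' => ?_⟩
  dsimp only
  rw [hv, hv', Finset.sum_mul_sum, Fintype.sum_prod_type]
  exact Finset.sum_congr rfl fun i _ => Finset.sum_congr rfl fun i' _ => by ring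

lemma isGram_one {n : ℕ} : IsGram (fun _ _ : Fin n => (1 : ℝ)) :=
  ⟨Unit, inferInstance, fun _ _ => 1, by simp⟩

lemma IsGram.pow {n : ℕ} {K : Fin n → Fin n → ℝ} (hK : IsGram K) (q : ℕ) :
    IsGram (fun ℓ ℓ' => K ℓ ℓ' ^ q) := by
  induction q with
  | zero => simpa using isGram_one
  | succ q ih =>
      have := ih.mul hK
      exact this.congr (fun ℓ ℓ' => by rw [pow_succ])

lemma IsGram.prod {n m : ℕ} (s : Finset (Fin m)) (K : Fin m → Fin n → Fin n → ℝ)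
    (h : ∀ j ∈ s, IsGram (K j)) :
    IsGram (fun ℓ ℓ' => ∏ j ∈ s, K j ℓ ℓ') := by
  classical
  induction s using Finset.induction_on with
  | empty => simpa using isGram_one
  | @insert a s' hj ih =>
      have h1 : IsGram (K a) := h a (Finset.mem_insert_self a s')
      have h2 := ih (fun j hjs => h j (Finset.mem_insert_of_mem hjs))
      exact (h1.mul h2).congr (fun ℓ ℓ' => by rw [Finset.prod_insert hj])

lemma IsGram.sum_nonneg {n : ℕ} {K : Fin n → Fin n → ℝ} (hK : IsGram K) :
    0 ≤ ∑ ℓ, ∑ ℓ', K ℓ ℓ' := by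
  obtain ⟨ι, _, v, hv⟩ := hK
  have : ∑ ℓ, ∑ ℓ', K ℓ ℓ' = ∑ i, (∑ ℓ, v ℓ i) * (∑ ℓ, v ℓ i) :=
    calc ∑ ℓ, ∑ ℓ', K ℓ ℓ'
        = ∑ ℓ, ∑ ℓ', ∑ i, v ℓ i * v ℓ' i := by simp_rw [hv]
      _ = ∑ ℓ, ∑ i, ∑ ℓ', v ℓ i * v ℓ' i :=
          Finset.sum_congr rfl fun ℓ _ => Finset.sum_comm
      _ = ∑ i, ∑ ℓ, ∑ ℓ', v ℓ i * v ℓ' i := Finset.sum_comm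
      _ = ∑ i, (∑ ℓ, v ℓ i) * (∑ ℓ, v ℓ i) := by
          refine Finset.sum_congr rfl fun i _ => ?_
          rw [Finset.sum_mul_sum]
  rw [this]
  exact Finset.sum_nonneg fun i _ => mul_self_nonneg _

/-- The generic Gram atom coming from rows of the matrices `σ`. -/
lemma isGram_quad {n N κ : ℕ} (c : ℝ) (hc : 0 ≤ c) (q : ℕ)
    (σ : Fin n → Matrix (Fin κ) (Fin N) ℝ) (x : Fin n → Fin κ → ℝ) :
    IsGram (fun ℓ ℓ' => ∑ k, ∑ k',
      x ℓ k * (c * ∑ t, σ ℓ k t * σ ℓ' k' t) ^ q * x ℓ' k') := by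
  refine ⟨Fin q → Fin N, inferInstance,
    fun ℓ s => Real.sqrt c ^ q * ∑ k, x ℓ k * ∏ i, σ ℓ k (s i), fun ℓ ℓ' => ?_⟩
  dsimp only
  have hcc : Real.sqrt c ^ q * Real.sqrt c ^ q = c ^ q := by
    rw [← mul_pow, Real.mul_self_sqrt hc]
  have key : ∀ k k', (∑ t, σ ℓ k t * σ ℓ' k' t) ^ q
      = ∑ s : Fin q → Fin N, (∏ i, σ ℓ k (s i)) * (∏ i, σ ℓ' k' (s i)) := by
    intro k k'
    rw [Fintype.sum_pow]
    exact Finset.sum_congr rfl fun s _ => by rw [← Finset.prod_mul_distrib]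
  calc (∑ k, ∑ k', x ℓ k * (c * ∑ t, σ ℓ k t * σ ℓ' k' t) ^ q * x ℓ' k')
      = ∑ k, ∑ k', ∑ s : Fin q → Fin N,
          c ^ q * ((x ℓ k * ∏ i, σ ℓ k (s i)) * (x ℓ' k' * ∏ i, σ ℓ' k' (s i))) := by
        refine Finset.sum_congr rfl fun k _ => Finset.sum_congr rfl fun k' _ => ?_
        have h1 : (c * ∑ t, σ ℓ k t * σ ℓ' k' t) ^ q
            = ∑ s : Fin q → Fin N, c ^ q * ((∏ i, σ ℓ k (s i)) * (∏ i, σ ℓ' k' (s i))) := by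
          rw [mul_pow, key, Finset.mul_sum]
        rw [h1, Finset.mul_sum, Finset.sum_mul]
        exact Finset.sum_congr rfl fun s _ => by ring
    _ = ∑ k, ∑ s : Fin q → Fin N, ∑ k',
          c ^ q * ((x ℓ k * ∏ i, σ ℓ k (s i)) * (x ℓ' k' * ∏ i, σ ℓ' k' (s i))) :=
        Finset.sum_congr rfl fun k _ => Finset.sum_comm
    _ = ∑ s : Fin q → Fin N, ∑ k, ∑ k',
          c ^ q * ((x ℓ k * ∏ i, σ ℓ k (s i)) * (x ℓ' k' * ∏ i, σ ℓ' k' (s i))) :=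
        Finset.sum_comm
    _ = ∑ s : Fin q → Fin N,
          (Real.sqrt c ^ q * ∑ k, x ℓ k * ∏ i, σ ℓ k (s i)) *
          (Real.sqrt c ^ q * ∑ k, x ℓ' k * ∏ i, σ ℓ' k (s i)) := by
        refine Finset.sum_congr rfl fun s _ => ?_
        rw [show (Real.sqrt c ^ q * ∑ k, x ℓ k * ∏ i, σ ℓ k (s i)) *
            (Real.sqrt c ^ q * ∑ k, x ℓ' k * ∏ i, σ ℓ' k (s i))
            = (Real.sqrt c ^ q * Real.sqrt c ^ q) *
              ((∑ k, x ℓ k * ∏ i, σ ℓ k (s i)) * (∑ k, x ℓ' k * ∏ i, σ ℓ' k (s i))) by ring,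
          hcc, Finset.sum_mul_sum]
        rw [Finset.mul_sum]
        refine Finset.sum_congr rfl fun k _ => ?_
        rw [Finset.mul_sum]

end GramAux

section DerivAux

lemma hasDerivAt_quad {κ : ℕ} (R E : Mat κ) (w : Fin κ → ℝ) (p : ℕ) :
    HasDerivAt (fun t : ℝ => quadForm (hadPow (R + t • E) p) w)
      (∑ a, ∑ b, (p : ℝ) * R a b ^ (p - 1) * E a b * w b * w a) 0 := by
  have h : ∀ a b : Fin κ, HasDerivAt
      (fun t : ℝ => (R a b + t * E a b) ^ p * w b * w a)
      ((p : ℝ) * R a b ^ (p - 1) * E a b * w b * w a) 0 := by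
    intro a b
    have h0 : HasDerivAt (fun t : ℝ => R a b + t * E a b) (E a b) 0 := by
      simpa using (((hasDerivAt_id (0:ℝ)).mul_const (E a b)).const_add (R a b))
    have h1 := ((h0.pow p).mul_const (w b)).mul_const (w a)
    simpa using h1
  have hsum : HasDerivAt (fun t : ℝ => ∑ a, ∑ b, (R a b + t * E a b) ^ p * w b * w a)
      (∑ a, ∑ b, (p : ℝ) * R a b ^ (p - 1) * E a b * w b * w a) 0 :=
    HasDerivAt.fun_sum fun a _ => HasDerivAt.fun_sum fun b _ => h a b
  convert hsum using 2 <;> rfl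

lemma hasDerivAt_xi {κ : ℕ} (θ : SpinParam κ) (R E : Mat κ) :
    HasDerivAt (fun t : ℝ => xiTheta θ (R + t • E))
      (∑ j, (∏ i ∈ Finset.univ.erase j, quadForm (hadPow R θ.p) (θ.w i) ^ θ.n i) *
        ((θ.n j : ℝ) * quadForm (hadPow R θ.p) (θ.w j) ^ (θ.n j - 1) *
          (∑ a, ∑ b, (θ.p : ℝ) * R a b ^ (θ.p - 1) * E a b * θ.w j b * θ.w j a))) 0 := by
  have hf : ∀ j : Fin θ.m, HasDerivAt
      (fun t : ℝ => quadForm (hadPow (R + t • E) θ.p) (θ.w j) ^ θ.n j)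
      ((θ.n j : ℝ) * quadForm (hadPow R θ.p) (θ.w j) ^ (θ.n j - 1) *
        (∑ a, ∑ b, (θ.p : ℝ) * R a b ^ (θ.p - 1) * E a b * θ.w j b * θ.w j a)) 0 := by
    intro j
    have := (hasDerivAt_quad R E (θ.w j) θ.p).fun_pow (θ.n j)
    simpa using this
  have h := HasDerivAt.fun_finsetProd (u := (Finset.univ : Finset (Fin θ.m)))
    (fun j _ => hf j)
  simp only [zero_smul, add_zero, smul_eq_mul] at h
  convert h using 1 <;> rfl

lemma gradXi_apply {κ : ℕ} (θ : SpinParam κ) (R : Mat κ) (k k' : Fin κ) :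
    gradXi θ R k k' =
      ∑ j, (∏ i ∈ Finset.univ.erase j, quadForm (hadPow R θ.p) (θ.w i) ^ θ.n i) *
        ((θ.n j : ℝ) * quadForm (hadPow R θ.p) (θ.w j) ^ (θ.n j - 1) *
          ((θ.p : ℝ) * R k k' ^ (θ.p - 1) * θ.w j k' * θ.w j k)) := by
  have h := (hasDerivAt_xi θ R (Matrix.single k k' (1:ℝ))).deriv
  rw [show gradXi θ R k k' =
      deriv (fun t : ℝ => xiTheta θ (R + t • Matrix.single k k' (1:ℝ))) 0 from rfl, h]
  refine Finset.sum_congr rfl fun j _ => ?_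
  congr 2
  rw [show (∑ a, ∑ b, (θ.p : ℝ) * R a b ^ (θ.p - 1) * Matrix.single k k' (1:ℝ) a b *
      θ.w j b * θ.w j a) = (θ.p : ℝ) * R k k' ^ (θ.p - 1) * θ.w j k' * θ.w j k from ?_]
  simp [Matrix.single, ite_and, ite_mul, mul_ite, Finset.sum_ite_eq]

end DerivAux


/-- For every `θ ∈ Θ`, `N, n ≥ 1`, matrices `σ¹, …, σⁿ ∈ ℝ^{κ×N}` and
vectors `u¹, …, uⁿ ∈ ℝ^κ`, one has `Σ_{ℓ,ℓ'} ⟨∇ξ_θ(σ^ℓ (σ^{ℓ'})ᵀ/N) u^{ℓ'}, u^ℓ⟩ ≥ 0`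
(positive semidefiniteness of the matrix covariance kernel of `Z_{N,θ}`). -/
theorem stmt6 (κ : ℕ) (hκ : 2 ≤ κ) (θ : SpinParam κ) (N n : ℕ) (hN : 1 ≤ N) (hn : 1 ≤ n)
    (σ : Fin n → Matrix (Fin κ) (Fin N) ℝ) (u : Fin n → Fin κ → ℝ) :
    0 ≤ ∑ ℓ, ∑ ℓ', dotProduct (u ℓ)
        ((gradXi θ ((N : ℝ)⁻¹ • (σ ℓ * (σ ℓ')ᵀ))).mulVec (u ℓ')) := by
  classical
  set Rm : Fin n → Fin n → Mat κ := fun ℓ ℓ' => (N : ℝ)⁻¹ • (σ ℓ * (σ ℓ')ᵀ) with hRm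
  have hR : ∀ ℓ ℓ' (k k' : Fin κ),
      Rm ℓ ℓ' k k' = (N : ℝ)⁻¹ * ∑ t, σ ℓ k t * σ ℓ' k' t := by
    intro ℓ ℓ' k k'
    simp [hRm, Matrix.mul_apply, Matrix.smul_apply, Matrix.transpose_apply, smul_eq_mul]
  have hc : (0 : ℝ) ≤ (N : ℝ)⁻¹ := by positivity
  set QK : Fin θ.m → Fin n → Fin n → ℝ :=
    fun j ℓ ℓ' => quadForm (hadPow (Rm ℓ ℓ') θ.p) (θ.w j) with hQKdef
  set DK : Fin θ.m → Fin n → Fin n → ℝ := fun j ℓ ℓ' =>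
    ∑ k, ∑ k', (u ℓ k * θ.w j k) * (Rm ℓ ℓ' k k') ^ (θ.p - 1) * (u ℓ' k' * θ.w j k')
    with hDKdef
  have hQK : ∀ j, IsGram (QK j) := by
    intro j
    refine (isGram_quad ((N : ℝ)⁻¹) hc θ.p σ (fun _ k => θ.w j k)).congr ?_
    intro ℓ ℓ'
    simp only [hQKdef, quadForm, hadPow, Matrix.of_apply]
    refine Finset.sum_congr rfl fun k _ => Finset.sum_congr rfl fun k' _ => ?_
    rw [hR]; ring
  have hDK : ∀ j, IsGram (DK j) := by
    intro j
    refine (isGram_quad ((N : ℝ)⁻¹) hc (θ.p - 1) σ (fun ℓ k => u ℓ k * θ.w j k)).congr ?_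
    intro ℓ ℓ'
    simp only [hDKdef]
    exact Finset.sum_congr rfl fun k _ => Finset.sum_congr rfl fun k' _ => by rw [hR]
  set K : Fin θ.m → Fin n → Fin n → ℝ := fun j ℓ ℓ' =>
    (∏ i ∈ Finset.univ.erase j, QK i ℓ ℓ' ^ θ.n i) *
      (QK j ℓ ℓ' ^ (θ.n j - 1) * DK j ℓ ℓ') with hKdef
  have hK : ∀ j, IsGram (K j) := by
    intro j
    exact (IsGram.prod _ _ (fun i _ => (hQK i).pow (θ.n i))).mul
      (((hQK j).pow (θ.n j - 1)).mul (hDK j))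
  have key : ∀ ℓ ℓ', dotProduct (u ℓ) ((gradXi θ (Rm ℓ ℓ')).mulVec (u ℓ'))
      = ∑ j, ((θ.p : ℝ) * (θ.n j : ℝ)) * K j ℓ ℓ' := by
    intro ℓ ℓ'
    have expand : dotProduct (u ℓ) ((gradXi θ (Rm ℓ ℓ')).mulVec (u ℓ'))
        = ∑ k, ∑ k', ∑ j,
            u ℓ k * ((∏ i ∈ Finset.univ.erase j, QK i ℓ ℓ' ^ θ.n i) *
              ((θ.n j : ℝ) * QK j ℓ ℓ' ^ (θ.n j - 1) *
                ((θ.p : ℝ) * Rm ℓ ℓ' k k' ^ (θ.p - 1) * θ.w j k' * θ.w j k))) * u ℓ' k' := by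
      simp only [dotProduct, Matrix.mulVec, gradXi_apply, hQKdef, Finset.mul_sum,
        Finset.sum_mul]
      refine Finset.sum_congr rfl fun k _ => Finset.sum_congr rfl fun k' _ =>
        Finset.sum_congr rfl fun j _ => by ring
    rw [expand]
    calc (∑ k, ∑ k', ∑ j, u ℓ k * ((∏ i ∈ Finset.univ.erase j, QK i ℓ ℓ' ^ θ.n i) *
              ((θ.n j : ℝ) * QK j ℓ ℓ' ^ (θ.n j - 1) *
                ((θ.p : ℝ) * Rm ℓ ℓ' k k' ^ (θ.p - 1) * θ.w j k' * θ.w j k))) * u ℓ' k')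
        = ∑ k, ∑ j, ∑ k', u ℓ k * ((∏ i ∈ Finset.univ.erase j, QK i ℓ ℓ' ^ θ.n i) *
              ((θ.n j : ℝ) * QK j ℓ ℓ' ^ (θ.n j - 1) *
                ((θ.p : ℝ) * Rm ℓ ℓ' k k' ^ (θ.p - 1) * θ.w j k' * θ.w j k))) * u ℓ' k' :=
          Finset.sum_congr rfl fun k _ => Finset.sum_comm
      _ = ∑ j, ∑ k, ∑ k', u ℓ k * ((∏ i ∈ Finset.univ.erase j, QK i ℓ ℓ' ^ θ.n i) *
              ((θ.n j : ℝ) * QK j ℓ ℓ' ^ (θ.n j - 1) *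
                ((θ.p : ℝ) * Rm ℓ ℓ' k k' ^ (θ.p - 1) * θ.w j k' * θ.w j k))) * u ℓ' k' :=
          Finset.sum_comm
      _ = ∑ j, ((θ.p : ℝ) * (θ.n j : ℝ)) * K j ℓ ℓ' := by
          refine Finset.sum_congr rfl fun j _ => ?_
          simp only [hKdef, hDKdef, Finset.mul_sum]
          refine Finset.sum_congr rfl fun k _ => Finset.sum_congr rfl fun k' _ => by ring
  calc (0:ℝ) ≤ ∑ j, ((θ.p : ℝ) * (θ.n j : ℝ)) * ∑ ℓ, ∑ ℓ', K j ℓ ℓ' := by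
        refine Finset.sum_nonneg fun j _ => mul_nonneg (by positivity) ?_
        exact (hK j).sum_nonneg
    _ = ∑ ℓ, ∑ ℓ', ∑ j, ((θ.p : ℝ) * (θ.n j : ℝ)) * K j ℓ ℓ' := by
        simp_rw [Finset.mul_sum]
        rw [Finset.sum_comm]
        exact Finset.sum_congr rfl fun ℓ _ => Finset.sum_comm
    _ = ∑ ℓ, ∑ ℓ', dotProduct (u ℓ)
          ((gradXi θ ((N : ℝ)⁻¹ • (σ ℓ * (σ ℓ')ᵀ))).mulVec (u ℓ')) := by
        refine Finset.sum_congr rfl fun ℓ _ => Finset.sum_congr rfl fun ℓ' _ => ?_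
        rw [← key ℓ ℓ']
end

section
/- Assume ξ : ℝ^{κ×κ} → ℝ admits a countable set Θ₀ ⊆ Θ and reals (α_θ)_{θ∈Θ₀} with ξ(R) = Σ_{θ∈Θ₀} α_θ² ξ_θ(R) for all ‖R‖₁ ≤ 1 and Σ_{θ∈Θ₀} α_θ² (1+ε₀)^{deg(θ)} < ∞ for some ε₀ > 0 (so ξ is smooth on a neighborhood of the unit ℓ¹-ball). Assume c := inf_{R ∈ R_κ} λ_min(∇²ξ(R)) > 0. Assume β = (β_θ)_{θ∈Θ_Q} satisfies Σ_{θ∈Θ_Q} β_θ² (1+ε₁)^{deg(θ)} < ∞ for some ε₁ > 0, and Σ_{θ∈Θ_Q} β_θ² C_θ < c. Then ξ_β(R) = ξ(R) + Σ_{θ∈Θ_Q} β_θ² ξ_θ(R) is convex on R_κ. -/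
open Matrix

/-- The action `(ω•R)_{k,k'} = R_{ω⁻¹(k), ω⁻¹(k')}` of a permutation on a matrix. -/
def permMat {κ : ℕ} (ω : Equiv.Perm (Fin κ)) (R : Mat κ) : Mat κ :=
  Matrix.of fun k k' => R (ω⁻¹ k) (ω⁻¹ k')

/-- The action `(ω•w)_k = w_{ω⁻¹(k)}` of a permutation on a vector. -/
def permVec {κ : ℕ} (ω : Equiv.Perm (Fin κ)) (w : Fin κ → ℝ) : Fin κ → ℝ :=
  fun k => w (ω⁻¹ k)

/-- The action `ω•θ = (p, m, n₁, …, n_m, ω•w₁, …, ω•w_m)` on parameters. -/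
def permParam {κ : ℕ} (ω : Equiv.Perm (Fin κ)) (θ : SpinParam κ) : SpinParam κ where
  p := θ.p
  m := θ.m
  n := θ.n
  w := fun j => permVec ω (θ.w j)
  p_pos := θ.p_pos
  m_pos := θ.m_pos
  n_pos := θ.n_pos
  w_bdd := fun j k => θ.w_bdd j (ω⁻¹ k)

/-- `Θ_Q`: parameters whose vectors `w₁, …, w_m` have all coordinates rational. -/
abbrev SpinParamQ (κ : ℕ) := {θ : SpinParam κ // ∀ j k, ∃ q : ℚ, θ.w j k = (q : ℝ)}

/-- The permutation action on `Θ_Q`. -/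
def permParamQ {κ : ℕ} (ω : Equiv.Perm (Fin κ)) (θ : SpinParamQ κ) : SpinParamQ κ :=
  ⟨permParam ω θ.1, fun j k => θ.2 j (ω⁻¹ k)⟩

/-- The Hessian quadratic form `⟨∇²f(R) Q, Q⟩`, i.e. the second derivative of
`t ↦ f(R + tQ)` at `0`. -/
noncomputable def hessQuad {κ : ℕ} (f : Mat κ → ℝ) (R Q : Mat κ) : ℝ :=
  iteratedDeriv 2 (fun t : ℝ => f (R + t • Q)) 0

/-- Squared Frobenius norm. -/
def frobSq {κ : ℕ} (Q : Mat κ) : ℝ := ∑ k, ∑ k', Q k k' ^ 2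

/-- `C` dominates both `‖∇ξ_θ(R)‖_∞` and `‖∇²ξ_θ(R)‖_op` for all `‖R‖₁ ≤ 1`. -/
def IsCBound {κ : ℕ} (θ : SpinParam κ) (C : ℝ) : Prop :=
  ∀ R : Mat κ, l1norm R ≤ 1 →
    (∀ k k', |gradXi θ R k k'| ≤ C) ∧
      ∀ Q : Mat κ, |hessQuad (xiTheta θ) R Q| ≤ C * frobSq Q

/-- `C_θ = sup_{‖R‖₁ ≤ 1} max(‖∇ξ_θ(R)‖_∞, ‖∇²ξ_θ(R)‖_op)`, realized as the least
constant dominating both quantities. -/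
noncomputable def Ctheta {κ : ℕ} (θ : SpinParam κ) : ℝ := sInf {C : ℝ | IsCBound θ C}

/-- `R_κ = {R ∈ [0,1]^{κ×κ} : ‖R‖₁ ≤ 1}`. -/
def Rset (κ : ℕ) : Set (Mat κ) :=
  {R | (∀ k k', 0 ≤ R k k' ∧ R k k' ≤ 1) ∧ l1norm R ≤ 1}


section auxlemmas

lemma aux_l1norm_nonneg {κ : ℕ} (R : Mat κ) : 0 ≤ l1norm R := by
  apply Finset.sum_nonneg; intro k _; apply Finset.sum_nonneg; intro k' _; exact abs_nonneg _

lemma aux_abs_entry_le_l1norm {κ : ℕ} (R : Mat κ) (k k' : Fin κ) : |R k k'| ≤ l1norm R := by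
  have h1 : |R k k'| ≤ ∑ k'', |R k k''| :=
    Finset.single_le_sum (f := fun k'' => |R k k''|) (fun i _ => abs_nonneg _) (Finset.mem_univ k')
  refine h1.trans ?_
  exact Finset.single_le_sum (f := fun a => ∑ k'', |R a k''|)
    (fun i _ => Finset.sum_nonneg fun _ _ => abs_nonneg _) (Finset.mem_univ k)

lemma aux_l1norm_add_le {κ : ℕ} (A B : Mat κ) : l1norm (A + B) ≤ l1norm A + l1norm B := by
  unfold l1norm
  rw [← Finset.sum_add_distrib]
  apply Finset.sum_le_sum; intro k _
  rw [← Finset.sum_add_distrib]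
  apply Finset.sum_le_sum; intro k' _
  simpa using abs_add_le (A k k') (B k k')

lemma aux_l1norm_smul {κ : ℕ} (c : ℝ) (A : Mat κ) : l1norm (c • A) = |c| * l1norm A := by
  unfold l1norm
  rw [Finset.mul_sum]
  congr 1; funext k
  rw [Finset.mul_sum]
  congr 1; funext k'
  simp [abs_mul]

lemma aux_frobSq_nonneg {κ : ℕ} (Q : Mat κ) : 0 ≤ frobSq Q := by
  apply Finset.sum_nonneg; intro k _; apply Finset.sum_nonneg; intro k' _; positivity

lemma aux_l1_sq_le {κ : ℕ} (Q : Mat κ) : l1norm Q ^ 2 ≤ (κ:ℝ)^2 * frobSq Q := by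
  have h1 : l1norm Q = ∑ z : Fin κ × Fin κ, |Q z.1 z.2| := by
    rw [Fintype.sum_prod_type]; rfl
  have h2 : frobSq Q = ∑ z : Fin κ × Fin κ, |Q z.1 z.2| ^ 2 := by
    rw [Fintype.sum_prod_type]; unfold frobSq; congr 1; funext k; congr 1; funext k'
    rw [sq_abs]
  rw [h1, h2]
  have := sq_sum_le_card_mul_sum_sq (s := (Finset.univ : Finset (Fin κ × Fin κ)))
    (f := fun z => |Q z.1 z.2|)
  simpa [Finset.card_univ, sq, mul_assoc] using this

lemma aux_convex_Rset (κ : ℕ) : Convex ℝ (Rset κ) := by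
  intro X hX Y hY a b ha hb hab
  constructor
  · intro k k'
    have h1 := (hX.1 k k').1; have h2 := (hX.1 k k').2
    have h3 := (hY.1 k k').1; have h4 := (hY.1 k k').2
    constructor
    · have : (a • X + b • Y) k k' = a * X k k' + b * Y k k' := by
        simp [Matrix.add_apply]
      rw [this]; positivity
    · have : (a • X + b • Y) k k' = a * X k k' + b * Y k k' := by
        simp [Matrix.add_apply]
      rw [this]; nlinarith
  · calc l1norm (a • X + b • Y) ≤ l1norm (a • X) + l1norm (b • Y) := aux_l1norm_add_le _ _
      _ = |a| * l1norm X + |b| * l1norm Y := by rw [aux_l1norm_smul, aux_l1norm_smul]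
      _ ≤ a * 1 + b * 1 := by
          rw [abs_of_nonneg ha, abs_of_nonneg hb]
          have := hX.2; have := hY.2
          have h0X := aux_l1norm_nonneg X
          gcongr
      _ = 1 := by linarith

lemma aux_sum_abs_pow_le {ι : Type*} (u : Finset ι) (a : ι → ℝ) (p : ℕ) (hp : 0 < p) :
    ∑ i ∈ u, |a i| ^ p ≤ (∑ i ∈ u, |a i|) ^ p := by
  set T := ∑ i ∈ u, |a i| with hT
  have hT0 : 0 ≤ T := Finset.sum_nonneg fun i _ => abs_nonneg _
  calc ∑ i ∈ u, |a i| ^ p ≤ ∑ i ∈ u, |a i| * T ^ (p - 1) := by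
        apply Finset.sum_le_sum; intro i hi
        have hle : |a i| ≤ T := Finset.single_le_sum (fun j _ => abs_nonneg (a j)) hi
        calc |a i| ^ p = |a i| * |a i| ^ (p-1) := by
              rw [← pow_succ']; congr 1; omega
          _ ≤ |a i| * T ^ (p-1) := by
              have := abs_nonneg (a i)
              gcongr
    _ = T * T ^ (p-1) := by rw [← Finset.sum_mul]
    _ = T ^ (p-1+1) := (pow_succ' T (p-1)).symm
    _ = T ^ p := by congr 1; omega

lemma aux_sum_abs_pow_le₂ {κ : ℕ} (a : Fin κ → Fin κ → ℝ) (p : ℕ) (hp : 0 < p) :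
    ∑ k, ∑ k', |a k k'| ^ p ≤ (∑ k, ∑ k', |a k k'|) ^ p := by
  have := aux_sum_abs_pow_le (Finset.univ : Finset (Fin κ × Fin κ)) (fun z => a z.1 z.2) p hp
  simpa [Fintype.sum_prod_type] using this

lemma aux_sum_const₂ {κ : ℕ} (C : ℝ) : ∑ _k : Fin κ, ∑ _k' : Fin κ, C = (κ:ℝ)^2 * C := by
  simp [Finset.sum_const, Finset.card_univ, nsmul_eq_mul]; ring

lemma aux_abs_sum₂ {κ : ℕ} (f : Fin κ → Fin κ → ℝ) :
    |∑ k, ∑ k', f k k'| ≤ ∑ k, ∑ k', |f k k'| := by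
  refine (Finset.abs_sum_le_sum_abs _ _).trans ?_
  apply Finset.sum_le_sum; intro k _
  exact Finset.abs_sum_le_sum_abs _ _

lemma aux_quad_deriv {κ : ℕ} (hκ : 1 ≤ κ) (x Q : Mat κ) (p : ℕ) (hp : 0 < p)
    (w : Fin κ → ℝ) (hw : ∀ k, |w k| ≤ 1) :
    ∃ g1 g2 : ℝ → ℝ,
      (∀ s, HasDerivAt (fun t => quadForm (hadPow (x + t • Q) p) w) (g1 s) s) ∧
      (∀ s, HasDerivAt g1 (g2 s) s) ∧
      ∀ r : ℝ, 1 ≤ r → ∀ s : ℝ, l1norm (x + s • Q) ≤ r →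
        |quadForm (hadPow (x + s • Q) p) w| ≤ r ^ p ∧
        |g1 s| ≤ (p : ℝ) * ((κ:ℝ)^2 * l1norm Q) * r ^ p ∧
        |g2 s| ≤ 2 * (p:ℝ)^2 * ((κ:ℝ)^2 * l1norm Q)^2 * r ^ p := by
  set L := l1norm Q with hLdef
  have hL0 : 0 ≤ L := aux_l1norm_nonneg Q
  have hQL : ∀ k k', |Q k k'| ≤ L := fun k k' => aux_abs_entry_le_l1norm Q k k'
  set A : ℝ → Fin κ → Fin κ → ℝ := fun s k k' => x k k' + s * Q k k' with hAdef
  have hAeq : ∀ s k k', A s k k' = (x + s • Q) k k' := by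
    intro s k k'; simp [hAdef, Matrix.add_apply]
  have hpt : ∀ t, quadForm (hadPow (x + t • Q) p) w = ∑ k, ∑ k', A t k k' ^ p * w k' * w k := by
    intro t; unfold quadForm hadPow
    refine Finset.sum_congr rfl fun k _ => Finset.sum_congr rfl fun k' _ => ?_
    rw [hAeq t k k']; rfl
  have hfun : (fun t => quadForm (hadPow (x + t • Q) p) w)
      = fun t => ∑ k, ∑ k', A t k k' ^ p * w k' * w k := funext hpt
  have hAder : ∀ s k k', HasDerivAt (fun t => A t k k') (Q k k') s := by
    intro s k k'
    exact (hasDerivAt_mul_const (Q k k')).const_add (x k k')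
  refine ⟨fun s => ∑ k, ∑ k', (p:ℝ) * A s k k' ^ (p-1) * Q k k' * w k' * w k,
          fun s => ∑ k, ∑ k',
            (p:ℝ) * (((p-1:ℕ):ℝ) * A s k k' ^ (p-1-1) * Q k k') * Q k k' * w k' * w k,
          ?_, ?_, ?_⟩
  · intro s
    rw [hfun]
    apply HasDerivAt.fun_sum; intro k _
    apply HasDerivAt.fun_sum; intro k' _
    exact (((hAder s k k').pow p).mul_const (w k')).mul_const (w k)
  · intro s
    apply HasDerivAt.fun_sum; intro k _
    apply HasDerivAt.fun_sum; intro k' _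
    exact (((((hAder s k k').pow (p-1)).const_mul (p:ℝ)).mul_const (Q k k')).mul_const
      (w k')).mul_const (w k)
  · intro r hr s hs
    have hr0 : (0:ℝ) ≤ r := le_trans zero_le_one hr
    have hA : ∀ k k', |A s k k'| ≤ r := by
      intro k k'; rw [hAeq]; exact (aux_abs_entry_le_l1norm _ k k').trans hs
    have hκ1 : (1:ℝ) ≤ (κ:ℝ) := by exact_mod_cast hκ
    refine ⟨?_, ?_, ?_⟩
    · rw [hpt s]
      refine (aux_abs_sum₂ _).trans ?_
      calc ∑ k, ∑ k', |A s k k' ^ p * w k' * w k|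
          ≤ ∑ k, ∑ k', |A s k k'| ^ p := by
            apply Finset.sum_le_sum; intro k _; apply Finset.sum_le_sum; intro k' _
            rw [abs_mul, abs_mul, abs_pow]
            have h1 := hw k'; have h2 := hw k
            calc |A s k k'| ^ p * |w k'| * |w k| ≤ |A s k k'| ^ p * 1 * 1 := by gcongr
              _ = |A s k k'| ^ p := by ring
        _ ≤ (∑ k, ∑ k', |A s k k'|) ^ p := aux_sum_abs_pow_le₂ _ p hp
        _ ≤ r ^ p := by
            have he : (∑ k, ∑ k', |A s k k'|) = l1norm (x + s • Q) := by
              unfold l1norm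
              refine Finset.sum_congr rfl fun k _ => Finset.sum_congr rfl fun k' _ => ?_
              rw [hAeq]
            exact pow_le_pow_left₀
              (Finset.sum_nonneg fun _ _ => Finset.sum_nonneg fun _ _ => abs_nonneg _)
              (he ▸ hs) p
    · beta_reduce
      refine (aux_abs_sum₂ _).trans ?_
      calc ∑ k, ∑ k', |(p:ℝ) * A s k k' ^ (p-1) * Q k k' * w k' * w k|
          ≤ ∑ (_k : Fin κ), ∑ (_k' : Fin κ), (p:ℝ) * r ^ (p-1) * L := by
            apply Finset.sum_le_sum; intro k _; apply Finset.sum_le_sum; intro k' _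
            simp only [abs_mul, abs_pow, Nat.abs_cast]
            have h1 := hw k'; have h2 := hw k
            have hAp : |A s k k'| ^ (p-1) ≤ r ^ (p-1) :=
              pow_le_pow_left₀ (abs_nonneg _) (hA k k') _
            have hQ := hQL k k'
            calc (p:ℝ) * |A s k k'| ^ (p-1) * |Q k k'| * |w k'| * |w k|
                ≤ (p:ℝ) * r ^ (p-1) * L * 1 * 1 := by
                  gcongr <;> first | assumption | positivity
              _ = (p:ℝ) * r ^ (p-1) * L := by ring
        _ = (κ:ℝ)^2 * ((p:ℝ) * r ^ (p-1) * L) := aux_sum_const₂ _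
        _ ≤ (p:ℝ) * ((κ:ℝ)^2 * L) * r ^ p := by
            have hrp : r ^ (p-1) ≤ r ^ p := pow_le_pow_right₀ hr (by omega)
            have h0 : (0:ℝ) ≤ (p:ℝ) * ((κ:ℝ)^2 * L) := by positivity
            calc (κ:ℝ)^2 * ((p:ℝ) * r ^ (p-1) * L) = (p:ℝ) * ((κ:ℝ)^2 * L) * r ^ (p-1) := by
                  ring
              _ ≤ (p:ℝ) * ((κ:ℝ)^2 * L) * r ^ p := mul_le_mul_of_nonneg_left hrp h0
    · beta_reduce
      refine (aux_abs_sum₂ _).trans ?_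
      calc ∑ k, ∑ k', |(p:ℝ) * (((p-1:ℕ):ℝ) * A s k k' ^ (p-1-1) * Q k k') * Q k k' * w k' * w k|
          ≤ ∑ (_k : Fin κ), ∑ (_k' : Fin κ), (p:ℝ) * (((p:ℝ)) * r ^ (p-1-1) * L) * L := by
            apply Finset.sum_le_sum; intro k _; apply Finset.sum_le_sum; intro k' _
            simp only [abs_mul, abs_pow, Nat.abs_cast]
            have h1 := hw k'; have h2 := hw k
            have hAp : |A s k k'| ^ (p-1-1) ≤ r ^ (p-1-1) :=
              pow_le_pow_left₀ (abs_nonneg _) (hA k k') _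
            have hQ := hQL k k'
            have hp1 : ((p-1:ℕ):ℝ) ≤ (p:ℝ) := by exact_mod_cast Nat.sub_le p 1
            have hwk' := abs_nonneg (w k'); have hwk := abs_nonneg (w k)
            calc (p:ℝ) * (((p-1:ℕ):ℝ) * |A s k k'| ^ (p-1-1) * |Q k k'|) * |Q k k'| * |w k'| * |w k|
                ≤ (p:ℝ) * (((p:ℝ)) * r ^ (p-1-1) * L) * L * 1 * 1 := by
                  gcongr <;> first | assumption | positivity
              _ = (p:ℝ) * (((p:ℝ)) * r ^ (p-1-1) * L) * L := by ring
        _ = (κ:ℝ)^2 * ((p:ℝ) * (((p:ℝ)) * r ^ (p-1-1) * L) * L) := aux_sum_const₂ _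
        _ ≤ 2 * (p:ℝ)^2 * ((κ:ℝ)^2 * L)^2 * r ^ p := by
            have hrp : r ^ (p-1-1) ≤ r ^ p := pow_le_pow_right₀ hr (by omega)
            have h0 : (0:ℝ) ≤ (p:ℝ)^2 * (κ:ℝ)^2 * L^2 := by positivity
            have hk1 : (1:ℝ) ≤ (κ:ℝ)^2 := by nlinarith
            have h2 : (κ:ℝ)^2 ≤ 2*((κ:ℝ)^2)^2 := by nlinarith
            have h3 : (0:ℝ) ≤ (p:ℝ)^2 * L^2 * r^p := by positivity
            calc (κ:ℝ)^2 * ((p:ℝ) * (((p:ℝ)) * r ^ (p-1-1) * L) * L)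
                = (p:ℝ)^2 * (κ:ℝ)^2 * L^2 * r^(p-1-1) := by ring
              _ ≤ (p:ℝ)^2 * (κ:ℝ)^2 * L^2 * r^p := by
                  calc (p:ℝ)^2 * (κ:ℝ)^2 * L^2 * r^(p-1-1)
                      = ((p:ℝ)^2 * (κ:ℝ)^2 * L^2) * r^(p-1-1) := by ring
                    _ ≤ ((p:ℝ)^2 * (κ:ℝ)^2 * L^2) * r^p := mul_le_mul_of_nonneg_left hrp h0
                    _ = (p:ℝ)^2 * (κ:ℝ)^2 * L^2 * r^p := by ring
              _ ≤ 2*(p:ℝ)^2*((κ:ℝ)^2*L)^2*r^p := by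
                  calc (p:ℝ)^2 * (κ:ℝ)^2 * L^2 * r^p = (κ:ℝ)^2 * ((p:ℝ)^2 * L^2 * r^p) := by
                        ring
                    _ ≤ (2*((κ:ℝ)^2)^2) * ((p:ℝ)^2 * L^2 * r^p) := mul_le_mul_of_nonneg_right h2 h3
                    _ = 2*(p:ℝ)^2*((κ:ℝ)^2*L)^2*r^p := by ring

lemma aux_pow_deriv (S : ℝ → Set ℝ) (M : ℝ) (hM : 0 ≤ M)
    (f f1 f2 : ℝ → ℝ) (p n : ℕ) (hp : 0 < p) (hn : 0 < n)
    (hd1 : ∀ s, HasDerivAt f (f1 s) s) (hd2 : ∀ s, HasDerivAt f1 (f2 s) s)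
    (hb : ∀ r : ℝ, 1 ≤ r → ∀ s ∈ S r, |f s| ≤ r^p ∧ |f1 s| ≤ (p:ℝ)*M*r^p ∧ |f2 s| ≤ 2*(p:ℝ)^2*M^2*r^p) :
    ∃ g1 g2 : ℝ → ℝ, (∀ s, HasDerivAt (fun t => f t ^ n) (g1 s) s) ∧
      (∀ s, HasDerivAt g1 (g2 s) s) ∧
      ∀ r : ℝ, 1 ≤ r → ∀ s ∈ S r, |f s ^ n| ≤ r^(p*n) ∧ |g1 s| ≤ ((p*n : ℕ):ℝ) * M * r^(p*n) ∧
        |g2 s| ≤ 2*((p*n : ℕ):ℝ)^2*M^2*r^(p*n) := by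
  refine ⟨fun s => (n:ℝ) * f s ^ (n-1) * f1 s,
    fun s => ((n:ℝ) * (((n-1:ℕ):ℝ) * f s ^ (n-1-1) * f1 s)) * f1 s
      + ((n:ℝ) * f s ^ (n-1)) * f2 s, ?_, ?_, ?_⟩
  · intro s; exact (hd1 s).pow n
  · intro s
    exact (((hd1 s).pow (n-1)).const_mul (n:ℝ)).mul (hd2 s)
  · intro r hr s hs
    have hr0 : (0:ℝ) ≤ r := le_trans zero_le_one hr
    obtain ⟨b0, b1, b2⟩ := hb r hr s hs
    have hf0 : (0:ℝ) ≤ |f s| := abs_nonneg _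
    have hrpn : (0:ℝ) ≤ r ^ p := by positivity
    refine ⟨?_, ?_, ?_⟩
    · rw [abs_pow, pow_mul]
      exact pow_le_pow_left₀ hf0 b0 n
    · have h1 : |(n:ℝ) * f s ^ (n-1) * f1 s| = (n:ℝ) * |f s| ^ (n-1) * |f1 s| := by
        simp [abs_mul, abs_pow, Nat.abs_cast]
      rw [h1]
      calc (n:ℝ) * |f s| ^ (n-1) * |f1 s| ≤ (n:ℝ) * (r^p) ^ (n-1) * ((p:ℝ)*M*r^p) := by
            gcongr
        _ = ((p:ℝ)*(n:ℝ)) * M * (r^(p*(n-1)) * r^p) := by rw [← pow_mul]; ring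
        _ = ((p*n:ℕ):ℝ) * M * r^(p*n) := by
            rw [← pow_add]
            have : p*(n-1) + p = p*n := by
              cases n with
              | zero => omega
              | succ k => simp only [Nat.add_sub_cancel]; ring
            rw [this]; push_cast; ring
    · have h2 : |((n:ℝ) * (((n-1:ℕ):ℝ) * f s ^ (n-1-1) * f1 s)) * f1 s
          + ((n:ℝ) * f s ^ (n-1)) * f2 s|
          ≤ (n:ℝ) * (((n-1:ℕ):ℝ) * |f s| ^ (n-1-1) * |f1 s|) * |f1 s|
            + ((n:ℝ) * |f s| ^ (n-1)) * |f2 s| := by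
        refine (abs_add_le _ _).trans ?_
        simp [abs_mul, abs_pow, Nat.abs_cast]
      refine h2.trans ?_
      have e1 : |f s| ^ (n-1-1) ≤ (r^p) ^ (n-1-1) := pow_le_pow_left₀ hf0 b0 _
      have e2 : |f s| ^ (n-1) ≤ (r^p) ^ (n-1) := pow_le_pow_left₀ hf0 b0 _
      calc (n:ℝ) * (((n-1:ℕ):ℝ) * |f s| ^ (n-1-1) * |f1 s|) * |f1 s|
            + ((n:ℝ) * |f s| ^ (n-1)) * |f2 s|
          ≤ (n:ℝ) * (((n-1:ℕ):ℝ) * (r^p) ^ (n-1-1) * ((p:ℝ)*M*r^p)) * ((p:ℝ)*M*r^p)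
            + ((n:ℝ) * (r^p) ^ (n-1)) * (2*(p:ℝ)^2*M^2*r^p) := by
            gcongr <;> first | assumption | positivity
        _ ≤ 2*((p*n:ℕ):ℝ)^2*M^2*r^(p*n) := by
            rcases eq_or_lt_of_le (show 1 ≤ n from hn) with h1 | h2
            · -- n = 1
              have hn1 : n = 1 := h1.symm
              subst hn1
              simp only [Nat.sub_self, pow_zero, Nat.cast_zero]
              push_cast
              ring_nf
              nlinarith [pow_nonneg hr0 p, pow_nonneg hr0 (p*1), sq_nonneg M,
                mul_nonneg (mul_nonneg (sq_nonneg (p:ℝ)) (sq_nonneg M)) (pow_nonneg hr0 p)]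
            · -- n ≥ 2
              have hA : (r^p)^(n-1-1) * r^p * r^p = r^(p*n) := by
                rw [← pow_mul, ← pow_add, ← pow_add]
                congr 1
                have h2' : 2 ≤ n := h2
                cases n with
                | zero => omega
                | succ k => cases k with
                  | zero => omega
                  | succ l => simp only [Nat.add_sub_cancel]; ring
              have hB : (r^p)^(n-1) * r^p = r^(p*n) := by
                rw [← pow_mul, ← pow_add]
                congr 1
                cases n with
                | zero => omega
                | succ k => simp only [Nat.add_sub_cancel]; ring
              have hn1 : ((n-1:ℕ):ℝ) ≤ (n:ℝ) := by exact_mod_cast Nat.sub_le n 1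
              have hrem : (0:ℝ) ≤ r^(p*n) := by positivity
              have hnn : (1:ℝ) ≤ (n:ℝ) := by exact_mod_cast hn
              have hpp : (1:ℝ) ≤ (p:ℝ) := by exact_mod_cast hp
              calc (n:ℝ) * (((n-1:ℕ):ℝ) * (r^p) ^ (n-1-1) * ((p:ℝ)*M*r^p)) * ((p:ℝ)*M*r^p)
                    + ((n:ℝ) * (r^p) ^ (n-1)) * (2*(p:ℝ)^2*M^2*r^p)
                  = (n:ℝ) * ((n-1:ℕ):ℝ) * (p:ℝ)^2 * M^2 * ((r^p)^(n-1-1) * r^p * r^p)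
                    + 2*(n:ℝ)*(p:ℝ)^2*M^2*((r^p)^(n-1) * r^p) := by ring
                _ = ((n:ℝ) * ((n-1:ℕ):ℝ) + 2*(n:ℝ)) * (p:ℝ)^2 * M^2 * r^(p*n) := by
                    rw [hA, hB]; ring
                _ ≤ (2 * (n:ℝ)^2) * (p:ℝ)^2 * M^2 * r^(p*n) := by
                    have nn0 : (0:ℝ) ≤ (n:ℝ) := by positivity
                    have hnn2 : (2:ℝ) ≤ (n:ℝ) := by exact_mod_cast h2
                    have f1' : (n:ℝ) * ((n-1:ℕ):ℝ) ≤ (n:ℝ) * (n:ℝ) :=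
                      mul_le_mul_of_nonneg_left hn1 nn0
                    have f2' : 2 * (n:ℝ) ≤ (n:ℝ) * (n:ℝ) :=
                      mul_le_mul_of_nonneg_right hnn2 nn0
                    have : (n:ℝ) * ((n-1:ℕ):ℝ) + 2*(n:ℝ) ≤ 2 * (n:ℝ)^2 := by nlinarith
                    have h0 : (0:ℝ) ≤ (p:ℝ)^2 * M^2 * r^(p*n) := by positivity
                    nlinarith [mul_le_mul_of_nonneg_right this h0]
                _ = 2*((p*n:ℕ):ℝ)^2*M^2*r^(p*n) := by push_cast; ring

lemma aux_prod_deriv {ι : Type*} [DecidableEq ι] (S : ℝ → Set ℝ) (M : ℝ)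
    (hM : 0 ≤ M) (u : Finset ι) (f f1 f2 : ι → ℝ → ℝ) (e : ι → ℕ)
    (hd1 : ∀ i ∈ u, ∀ s, HasDerivAt (f i) (f1 i s) s)
    (hd2 : ∀ i ∈ u, ∀ s, HasDerivAt (f1 i) (f2 i s) s)
    (hb : ∀ i ∈ u, ∀ r : ℝ, 1 ≤ r → ∀ s ∈ S r, |f i s| ≤ r ^ e i ∧ |f1 i s| ≤ (e i : ℝ) * M * r ^ e i ∧
      |f2 i s| ≤ 2 * (e i : ℝ)^2 * M^2 * r ^ e i) :
    ∃ P1 P2 : ℝ → ℝ,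
      (∀ s, HasDerivAt (fun t => ∏ i ∈ u, f i t) (P1 s) s) ∧
      (∀ s, HasDerivAt P1 (P2 s) s) ∧
      (∀ r : ℝ, 1 ≤ r → ∀ s ∈ S r, |∏ i ∈ u, f i s| ≤ r ^ (∑ i ∈ u, e i) ∧
        |P1 s| ≤ ((∑ i ∈ u, e i : ℕ):ℝ) * M * r ^ (∑ i ∈ u, e i) ∧
        |P2 s| ≤ 2 * ((∑ i ∈ u, e i : ℕ):ℝ)^2 * M^2 * r ^ (∑ i ∈ u, e i)) := by
  induction u using Finset.cons_induction with
  | empty =>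
    refine ⟨fun _ => 0, fun _ => 0, ?_, ?_, ?_⟩
    · intro s; simpa using hasDerivAt_const s (1:ℝ)
    · intro s; exact hasDerivAt_const s (0:ℝ)
    · intro r hr s hs; simp
  | cons a t ha ih =>
    obtain ⟨P1, P2, hP1, hP2, hPb⟩ := ih
      (fun i hi => hd1 i (Finset.mem_cons_of_mem hi))
      (fun i hi => hd2 i (Finset.mem_cons_of_mem hi))
      (fun i hi => hb i (Finset.mem_cons_of_mem hi))
    have hda1 := hd1 a (Finset.mem_cons_self a t)
    have hda2 := hd2 a (Finset.mem_cons_self a t)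
    have hba := hb a (Finset.mem_cons_self a t)
    refine ⟨fun s => f1 a s * (∏ i ∈ t, f i s) + f a s * P1 s,
      fun s => (f2 a s * (∏ i ∈ t, f i s) + f1 a s * P1 s)
        + (f1 a s * P1 s + f a s * P2 s), ?_, ?_, ?_⟩
    · intro s
      have h := (hda1 s).mul (hP1 s)
      have heq : (fun t' => f a t' * ∏ i ∈ t, f i t') = fun t' => ∏ i ∈ Finset.cons a t ha, f i t' := by
        funext t'; rw [Finset.prod_cons]
      rw [← heq]
      exact h
    · intro s
      exact ((hda2 s).mul (hP1 s)).add ((hda1 s).mul (hP2 s))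
    · intro r hr s hs
      have hr0 : (0:ℝ) ≤ r := le_trans zero_le_one hr
      obtain ⟨a0, a1, a2⟩ := hba r hr s hs
      obtain ⟨q0, q1, q2⟩ := hPb r hr s hs
      set E := ∑ i ∈ t, e i with hE
      have hsum : ∑ i ∈ Finset.cons a t ha, e i = e a + E := Finset.sum_cons ha
      have hprod : ∏ i ∈ Finset.cons a t ha, f i s = f a s * ∏ i ∈ t, f i s :=
        Finset.prod_cons ha
      have hre : (0:ℝ) ≤ r ^ e a := by positivity
      have hrE : (0:ℝ) ≤ r ^ E := by positivity
      have hea0 : (0:ℝ) ≤ (e a : ℝ) := by positivity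
      have hE0 : (0:ℝ) ≤ (E : ℝ) := by positivity
      have hfa := abs_nonneg (f a s)
      have hradd : r ^ e a * r ^ E = r ^ (e a + E) := (pow_add r (e a) E).symm
      rw [hsum, hprod]
      refine ⟨?_, ?_, ?_⟩
      · rw [abs_mul, ← hradd]
        exact mul_le_mul a0 q0 (abs_nonneg _) hre
      · calc |f1 a s * (∏ i ∈ t, f i s) + f a s * P1 s|
            ≤ |f1 a s| * |∏ i ∈ t, f i s| + |f a s| * |P1 s| := by
              refine (abs_add_le _ _).trans ?_
              rw [abs_mul, abs_mul]
          _ ≤ ((e a : ℝ) * M * r ^ e a) * r ^ E + r ^ e a * (((E:ℕ):ℝ) * M * r ^ E) := by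
              gcongr <;> first | assumption | positivity
          _ = (((e a : ℝ) + (E:ℝ)) * M) * (r ^ e a * r ^ E) := by push_cast; ring
          _ = ((e a + E : ℕ):ℝ) * M * r ^ (e a + E) := by rw [hradd]; push_cast; ring
      · calc |(f2 a s * (∏ i ∈ t, f i s) + f1 a s * P1 s) + (f1 a s * P1 s + f a s * P2 s)|
            ≤ (|f2 a s| * |∏ i ∈ t, f i s| + |f1 a s| * |P1 s|)
              + (|f1 a s| * |P1 s| + |f a s| * |P2 s|) := by
              refine (abs_add_le _ _).trans ?_
              gcongr <;> [skip;skip] <;> refine (abs_add_le _ _).trans ?_ <;>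
                rw [abs_mul, abs_mul]
          _ ≤ ((2 * (e a : ℝ)^2 * M^2 * r ^ e a) * r ^ E
                + ((e a : ℝ) * M * r ^ e a) * (((E:ℕ):ℝ) * M * r ^ E))
              + (((e a : ℝ) * M * r ^ e a) * (((E:ℕ):ℝ) * M * r ^ E)
                + r ^ e a * (2 * ((E:ℕ):ℝ)^2 * M^2 * r ^ E)) := by
              gcongr <;> first | assumption | positivity
          _ = (2 * (e a:ℝ)^2 + 2 * (e a:ℝ) * (E:ℝ) + 2 * (E:ℝ)^2) * M^2 * (r ^ e a * r ^ E) := by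
              push_cast; ring
          _ ≤ (2 * ((e a:ℝ) + (E:ℝ))^2) * M^2 * (r ^ e a * r ^ E) := by
              have hM2 : (0:ℝ) ≤ M^2 * (r ^ e a * r ^ E) := by positivity
              have : (2 * (e a:ℝ)^2 + 2 * (e a:ℝ) * (E:ℝ) + 2 * (E:ℝ)^2)
                  ≤ 2 * ((e a:ℝ) + (E:ℝ))^2 := by nlinarith [mul_nonneg hea0 hE0]
              calc (2 * (e a:ℝ)^2 + 2 * (e a:ℝ) * (E:ℝ) + 2 * (E:ℝ)^2) * M^2 * (r ^ e a * r ^ E)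
                  = (2 * (e a:ℝ)^2 + 2 * (e a:ℝ) * (E:ℝ) + 2 * (E:ℝ)^2) * (M^2 * (r ^ e a * r ^ E)) := by ring
                _ ≤ (2 * ((e a:ℝ) + (E:ℝ))^2) * (M^2 * (r ^ e a * r ^ E)) :=
                    mul_le_mul_of_nonneg_right this hM2
                _ = (2 * ((e a:ℝ) + (E:ℝ))^2) * M^2 * (r ^ e a * r ^ E) := by ring
          _ = 2 * ((e a + E : ℕ):ℝ)^2 * M^2 * r ^ (e a + E) := by rw [hradd]; push_cast; ring

lemma aux_deg_pos {κ : ℕ} (θ : SpinParam κ) : 0 < θ.deg := by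
  have hne : (Finset.univ : Finset (Fin θ.m)).Nonempty := by
    have := θ.m_pos
    have : Nonempty (Fin θ.m) := Fin.pos_iff_nonempty.mp this
    exact Finset.univ_nonempty
  have hs : 0 < ∑ j, θ.n j := Finset.sum_pos (fun j _ => θ.n_pos j) hne
  exact Nat.mul_pos θ.p_pos hs

lemma aux_xi_deriv {κ : ℕ} (hκ : 1 ≤ κ) (θ : SpinParam κ) (x Q : Mat κ) :
    ∃ D1 D2 : ℝ → ℝ,
      (∀ s, HasDerivAt (fun t => xiTheta θ (x + t • Q)) (D1 s) s) ∧
      (∀ s, HasDerivAt D1 (D2 s) s) ∧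
      ∀ r : ℝ, 1 ≤ r → ∀ s : ℝ, l1norm (x + s • Q) ≤ r →
        |xiTheta θ (x + s • Q)| ≤ r ^ θ.deg ∧
        |D1 s| ≤ (θ.deg:ℝ) * ((κ:ℝ)^2 * l1norm Q) * r ^ θ.deg ∧
        |D2 s| ≤ 2 * (θ.deg:ℝ)^2 * ((κ:ℝ)^2 * l1norm Q)^2 * r ^ θ.deg := by
  set M := (κ:ℝ)^2 * l1norm Q with hMdef
  have hM : 0 ≤ M := by
    have := aux_l1norm_nonneg Q; positivity
  set S : ℝ → Set ℝ := fun r => {s | l1norm (x + s • Q) ≤ r} with hSdef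
  have hj : ∀ j : Fin θ.m, ∃ g1 g2 : ℝ → ℝ,
      (∀ s, HasDerivAt (fun t => quadForm (hadPow (x + t • Q) θ.p) (θ.w j) ^ θ.n j) (g1 s) s) ∧
      (∀ s, HasDerivAt g1 (g2 s) s) ∧
      ∀ r, 1 ≤ r → ∀ s ∈ S r,
        |quadForm (hadPow (x + s • Q) θ.p) (θ.w j) ^ θ.n j| ≤ r ^ (θ.p * θ.n j) ∧
        |g1 s| ≤ ((θ.p * θ.n j : ℕ):ℝ) * M * r ^ (θ.p * θ.n j) ∧
        |g2 s| ≤ 2 * ((θ.p * θ.n j : ℕ):ℝ)^2 * M^2 * r ^ (θ.p * θ.n j) := by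
    intro j
    obtain ⟨q1, q2, hq1, hq2, hqb⟩ := aux_quad_deriv hκ x Q θ.p θ.p_pos (θ.w j) (θ.w_bdd j)
    exact aux_pow_deriv S M hM _ q1 q2 θ.p (θ.n j) θ.p_pos (θ.n_pos j) hq1 hq2
      (fun r hr s hs => hqb r hr s hs)
  choose g1 g2 hg1 hg2 hgb using hj
  obtain ⟨P1, P2, hP1, hP2, hPb⟩ := aux_prod_deriv S M hM Finset.univ
    (fun j t => quadForm (hadPow (x + t • Q) θ.p) (θ.w j) ^ θ.n j) g1 g2
    (fun j => θ.p * θ.n j) (fun j _ => hg1 j) (fun j _ => hg2 j) (fun j _ => hgb j)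
  have hdeg : ∑ j, (θ.p * θ.n j) = θ.deg := by rw [SpinParam.deg, Finset.mul_sum]
  rw [hdeg] at hPb
  refine ⟨P1, P2, ?_, hP2, ?_⟩
  · intro s
    exact hP1 s
  · intro r hr s hs
    exact hPb r hr s hs

lemma aux_hessQuad_eq {κ : ℕ} (f : Mat κ → ℝ) (R Q : Mat κ) (D1 D2 : ℝ → ℝ)
    (h1 : ∀ s, HasDerivAt (fun t => f (R + t • Q)) (D1 s) s)
    (h2 : ∀ s, HasDerivAt D1 (D2 s) s) :
    hessQuad f R Q = D2 0 := by
  unfold hessQuad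
  rw [show (2:ℕ) = 1 + 1 from rfl, iteratedDeriv_succ, iteratedDeriv_one]
  have hd : deriv (fun t => f (R + t • Q)) = D1 := funext fun s => (h1 s).deriv
  rw [hd]
  exact (h2 0).deriv

lemma aux_l1_stdBasis {κ : ℕ} (k k' : Fin κ) :
    l1norm (Matrix.single k k' (1:ℝ)) = 1 := by
  unfold l1norm
  have h : ∀ a b : Fin κ, |Matrix.single k k' (1:ℝ) a b|
      = if k = a then (if k' = b then (1:ℝ) else 0) else 0 := by
    intro a b
    rw [Matrix.single]
    simp only [Matrix.of_apply, ite_and]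
    by_cases h1 : k = a <;> by_cases h2 : k' = b <;> simp [h1, h2]
  simp only [h]
  simp [Finset.sum_ite_eq]

lemma aux_isCBound {κ : ℕ} (hκ : 1 ≤ κ) (θ : SpinParam κ) :
    IsCBound θ (2 * (θ.deg:ℝ)^2 * (κ:ℝ)^6) := by
  have hdeg1 : (1:ℝ) ≤ (θ.deg:ℝ) := by exact_mod_cast aux_deg_pos θ
  have hκ1 : (1:ℝ) ≤ (κ:ℝ) := by exact_mod_cast hκ
  intro R hR
  constructor
  · intro k k'
    obtain ⟨D1, D2, h1, h2, hb⟩ := aux_xi_deriv hκ θ R (Matrix.single k k' 1)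
    have hgrad : gradXi θ R k k' = D1 0 := by
      unfold gradXi gradMat
      simp only [Matrix.of_apply]
      exact (h1 0).deriv
    have hs : l1norm (R + (0:ℝ) • Matrix.single k k' 1) ≤ 1 := by simpa using hR
    obtain ⟨_, hb1, _⟩ := hb 1 le_rfl 0 hs
    rw [hgrad]
    refine hb1.trans ?_
    rw [aux_l1_stdBasis]
    simp only [one_pow, mul_one]
    have e1 : (θ.deg:ℝ) ≤ (θ.deg:ℝ)^2 := by nlinarith
    have e2 : (κ:ℝ)^2 ≤ (κ:ℝ)^6 := pow_le_pow_right₀ hκ1 (by norm_num)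
    have e3 : (0:ℝ) ≤ (θ.deg:ℝ)^2 * (κ:ℝ)^6 := by positivity
    calc (θ.deg:ℝ) * (κ:ℝ)^2 ≤ (θ.deg:ℝ)^2 * (κ:ℝ)^6 :=
          mul_le_mul e1 e2 (by positivity) (by positivity)
      _ ≤ 2 * (θ.deg:ℝ)^2 * (κ:ℝ)^6 := by linarith
  · intro Q
    obtain ⟨D1, D2, h1, h2, hb⟩ := aux_xi_deriv hκ θ R Q
    rw [aux_hessQuad_eq _ R Q D1 D2 h1 h2]
    have hs : l1norm (R + (0:ℝ) • Q) ≤ 1 := by simpa using hR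
    obtain ⟨_, _, hb2⟩ := hb 1 le_rfl 0 hs
    refine hb2.trans ?_
    simp only [one_pow, mul_one]
    have hl := aux_l1_sq_le Q
    have hF := aux_frobSq_nonneg Q
    have hL0 := aux_l1norm_nonneg Q
    calc 2 * (θ.deg:ℝ)^2 * ((κ:ℝ)^2 * l1norm Q)^2
        = 2 * (θ.deg:ℝ)^2 * (κ:ℝ)^4 * (l1norm Q)^2 := by ring
      _ ≤ 2 * (θ.deg:ℝ)^2 * (κ:ℝ)^4 * ((κ:ℝ)^2 * frobSq Q) := by
          have h0 : (0:ℝ) ≤ 2 * (θ.deg:ℝ)^2 * (κ:ℝ)^4 := by positivity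
          exact mul_le_mul_of_nonneg_left hl h0
      _ = 2 * (θ.deg:ℝ)^2 * (κ:ℝ)^6 * frobSq Q := by ring

lemma aux_Cbound_nonneg {κ : ℕ} (hκ : 1 ≤ κ) (θ : SpinParam κ) (C : ℝ)
    (h : IsCBound θ C) : 0 ≤ C := by
  have h0 : l1norm (0 : Mat κ) ≤ 1 := by
    unfold l1norm; simp
  have k0 : Fin κ := ⟨0, by omega⟩
  exact (abs_nonneg _).trans ((h 0 h0).1 k0 k0)

lemma aux_hess_le_Ctheta {κ : ℕ} (hκ : 1 ≤ κ) (θ : SpinParam κ) (R : Mat κ)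
    (hR : l1norm R ≤ 1) (Q : Mat κ) :
    |hessQuad (xiTheta θ) R Q| ≤ Ctheta θ * frobSq Q := by
  have hne : {C : ℝ | IsCBound θ C}.Nonempty := ⟨_, aux_isCBound hκ θ⟩
  have hF := aux_frobSq_nonneg Q
  have key : ∀ ε : ℝ, 0 < ε → |hessQuad (xiTheta θ) R Q| ≤ (Ctheta θ + ε) * frobSq Q := by
    intro ε hε
    obtain ⟨C, hC, hlt⟩ := Real.lt_sInf_add_pos hne hε
    exact ((hC R hR).2 Q).trans (mul_le_mul_of_nonneg_right hlt.le hF)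
  rcases eq_or_lt_of_le hF with hF0 | hFpos
  · have := key 1 one_pos
    rw [← hF0] at this ⊢
    simpa using this
  · by_contra hcon
    push_neg at hcon
    have := key ((|hessQuad (xiTheta θ) R Q| - Ctheta θ * frobSq Q) / (2 * frobSq Q))
      (div_pos (by linarith) (by linarith))
    have hexp : (Ctheta θ + (|hessQuad (xiTheta θ) R Q| - Ctheta θ * frobSq Q) / (2 * frobSq Q))
        * frobSq Q = Ctheta θ * frobSq Q
          + (|hessQuad (xiTheta θ) R Q| - Ctheta θ * frobSq Q) / 2 := by
      field_simp
    rw [hexp] at this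
    linarith

lemma aux_geom_bound (q : ℝ) (h0 : 0 ≤ q) (h1 : q < 1) :
    ∃ Mq : ℝ, 0 ≤ Mq ∧ ∀ d : ℕ, (1 + (d:ℝ))^2 * q^d ≤ Mq := by
  have hn : ‖q‖ < 1 := by rwa [Real.norm_eq_abs, abs_of_nonneg h0]
  have s1 : Summable fun d : ℕ => q ^ d := summable_geometric_of_lt_one h0 h1
  have s2 : Summable fun d : ℕ => (d:ℝ) * q ^ d := by
    have := summable_pow_mul_geometric_of_norm_lt_one (R := ℝ) 1 hn
    simpa using this
  have s3 : Summable fun d : ℕ => (d:ℝ)^2 * q ^ d :=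
    summable_pow_mul_geometric_of_norm_lt_one (R := ℝ) 2 hn
  have hf : Summable fun d : ℕ => (1 + (d:ℝ))^2 * q^d := by
    have : (fun d : ℕ => (1 + (d:ℝ))^2 * q^d)
        = fun d : ℕ => q ^ d + 2 * ((d:ℝ) * q ^ d) + (d:ℝ)^2 * q ^ d := by
      funext d; ring
    rw [this]
    exact (s1.add (s2.mul_left 2)).add s3
  refine ⟨∑' d : ℕ, (1 + (d:ℝ))^2 * q^d, tsum_nonneg (fun d => by positivity), fun d => ?_⟩
  exact Summable.le_tsum hf d (fun j _ => by positivity)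

lemma aux_summable_dom {ι : Type*} (a : ι → ℝ) (d : ι → ℕ) (ε r : ℝ) (hε : 0 < ε)
    (hr1 : 1 ≤ r) (hrε : r < 1 + ε)
    (hsum : Summable fun i => a i ^ 2 * (1 + ε) ^ d i) :
    Summable fun i => a i ^ 2 * ((1 + (d i : ℝ))^2 * r ^ d i) := by
  have h1ε : (0:ℝ) < 1 + ε := by linarith
  have hq0 : 0 ≤ r / (1 + ε) := by positivity
  have hq1 : r / (1 + ε) < 1 := by rw [div_lt_one h1ε]; exact hrε
  obtain ⟨Mq, hMq0, hMq⟩ := aux_geom_bound _ hq0 hq1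
  refine Summable.of_nonneg_of_le (fun i => by positivity) (fun i => ?_) (hsum.mul_left Mq)
  have key : (1 + (d i:ℝ))^2 * r ^ d i ≤ Mq * (1 + ε) ^ d i := by
    have h := hMq (d i)
    have hpow : (r / (1+ε)) ^ d i * (1+ε) ^ d i = r ^ d i := by
      rw [div_pow, div_mul_cancel₀]
      positivity
    have := mul_le_mul_of_nonneg_right h (le_of_lt (pow_pos h1ε (d i)))
    calc (1 + (d i:ℝ))^2 * r ^ d i
        = (1 + (d i:ℝ))^2 * ((r / (1+ε)) ^ d i * (1+ε) ^ d i) := by rw [hpow]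
      _ = (1 + (d i:ℝ))^2 * (r / (1+ε)) ^ d i * (1+ε) ^ d i := by ring
      _ ≤ Mq * (1+ε) ^ d i := this
  calc a i ^ 2 * ((1 + (d i:ℝ))^2 * r ^ d i) ≤ a i ^ 2 * (Mq * (1+ε) ^ d i) :=
        mul_le_mul_of_nonneg_left key (sq_nonneg _)
    _ = Mq * (a i ^ 2 * (1+ε) ^ d i) := by ring

lemma aux_tsum_hasDerivAt {ι : Type*} (S : Set ℝ) (hS : IsOpen S) (F F' : ι → ℝ → ℝ)
    (u : ι → ℝ) (hu : Summable u)
    (hder : ∀ i s, HasDerivAt (F i) (F' i s) s)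
    (hbF' : ∀ i, ∀ s ∈ S, |F' i s| ≤ u i)
    (hsumF : ∀ s ∈ S, Summable fun i => F i s) :
    ∀ s ∈ S, HasDerivAt (fun t => ∑' i, F i t) (∑' i, F' i s) s := by
  intro s hs
  exact hasDerivAt_of_tendstoUniformlyOn
    (f := fun (t : Finset ι) (x : ℝ) => ∑ i ∈ t, F i x)
    (f' := fun (t : Finset ι) (x : ℝ) => ∑ i ∈ t, F' i x) hS
    (tendstoUniformlyOn_tsum hu (fun i x hx => by
      simpa [Real.norm_eq_abs] using hbF' i x hx))
    (Filter.Eventually.of_forall (fun t x _ => HasDerivAt.fun_sum (fun i _ => hder i x)))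
    (fun x hx => (hsumF x hx).hasSum) hs

lemma aux_deriv2_shift (g : ℝ → ℝ) (s : ℝ) :
    iteratedDeriv 2 (fun u => g (s + u)) 0 = deriv (deriv g) s := by
  rw [show (2:ℕ) = 1 + 1 from rfl, iteratedDeriv_succ, iteratedDeriv_one]
  have h1 : deriv (fun u => g (s + u)) = fun u => deriv g (s + u) :=
    funext fun u => deriv_comp_const_add g s u
  rw [h1, deriv_comp_const_add (deriv g) s 0, add_zero]

lemma aux_deriv2_congr (g h : ℝ → ℝ) (O : Set ℝ) (hO : IsOpen O) (heq : Set.EqOn g h O)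
    (s : ℝ) (hs : s ∈ O) : deriv (deriv g) s = deriv (deriv h) s := by
  have hev : g =ᶠ[nhds s] h := Filter.eventuallyEq_of_mem (hO.mem_nhds hs) heq
  exact hev.deriv.deriv_eq

lemma aux_arith (dg Mc rp : ℝ) (hdg : 0 ≤ dg) (hMc : 0 ≤ Mc) (hrp : 0 ≤ rp) :
    rp ≤ 2*(1+Mc)^2 * ((1+dg)^2 * rp) ∧
    dg * Mc * rp ≤ 2*(1+Mc)^2 * ((1+dg)^2 * rp) ∧
    2*dg^2*Mc^2*rp ≤ 2*(1+Mc)^2 * ((1+dg)^2 * rp) := by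
  have h1 : (1:ℝ) ≤ (1+Mc)^2 := by nlinarith
  have h2 : (1:ℝ) ≤ (1+dg)^2 := by nlinarith
  have h3 : dg ≤ (1+dg)^2 := by nlinarith
  have h4 : Mc ≤ (1+Mc)^2 := by nlinarith
  have h5 : dg^2 ≤ (1+dg)^2 := by nlinarith
  have h6 : Mc^2 ≤ (1+Mc)^2 := by nlinarith
  refine ⟨?_, ?_, ?_⟩
  · nlinarith [mul_le_mul h1 h2 (by norm_num) (by positivity), mul_nonneg (mul_nonneg (by positivity : (0:ℝ) ≤ (1+Mc)^2) (by positivity : (0:ℝ) ≤ (1+dg)^2)) hrp]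
  · have := mul_le_mul h3 h4 hMc (by positivity : (0:ℝ) ≤ (1+dg)^2)
    -- dg * Mc ≤ (1+dg)^2 * (1+Mc)^2
    have h7 : dg * Mc * rp ≤ (1+dg)^2 * (1+Mc)^2 * rp :=
      mul_le_mul_of_nonneg_right this hrp
    nlinarith [mul_nonneg (mul_nonneg (by positivity : (0:ℝ) ≤ (1+dg)^2) (by positivity : (0:ℝ) ≤ (1+Mc)^2)) hrp]
  · have := mul_le_mul h5 h6 (by positivity) (by positivity : (0:ℝ) ≤ (1+dg)^2)
    have h7 : dg^2 * Mc^2 * rp ≤ (1+dg)^2 * (1+Mc)^2 * rp :=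
      mul_le_mul_of_nonneg_right this hrp
    nlinarith

end auxlemmas

set_option maxHeartbeats 2000000

/-- if `ξ = Σ_{θ∈Θ₀} α_θ² ξ_θ` (Θ₀ countable, with exponential decay of
the coefficients), `c := inf_{R∈R_κ} λ_min(∇²ξ(R)) > 0`, and
`β` has exponentially decaying coefficients with `Σ_{θ∈Θ_Q} β_θ² C_θ < c`, then
`ξ_β = ξ + Σ_{θ∈Θ_Q} β_θ² ξ_θ` is convex on `R_κ`. -/
theorem stmt12 (κ : ℕ) (hκ : 2 ≤ κ) (ξ : Mat κ → ℝ)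
    (T : Set (SpinParam κ)) (hT : T.Countable) (α : SpinParam κ → ℝ)
    (hrep : ∀ R : Mat κ, l1norm R ≤ 1 → ξ R = ∑' θ : T, α θ.1 ^ 2 * xiTheta θ.1 R)
    (hαsum : ∃ ε₀ : ℝ, 0 < ε₀ ∧ Summable fun θ : T => α θ.1 ^ 2 * (1 + ε₀) ^ θ.1.deg)
    (c : ℝ) (hc : 0 < c)
    (hstrong : ∀ R ∈ Rset κ, ∀ Q : Mat κ, c * frobSq Q ≤ hessQuad ξ R Q)
    (β : SpinParamQ κ → ℝ)
    (hβsum : ∃ ε₁ : ℝ, 0 < ε₁ ∧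
      Summable fun θ : SpinParamQ κ => β θ ^ 2 * (1 + ε₁) ^ θ.1.deg)
    (hβC : Summable fun θ : SpinParamQ κ => β θ ^ 2 * Ctheta θ.1)
    (hβCc : ∑' θ : SpinParamQ κ, β θ ^ 2 * Ctheta θ.1 < c) :
    ConvexOn ℝ (Rset κ)
      (fun R => ξ R + ∑' θ : SpinParamQ κ, β θ ^ 2 * xiTheta θ.1 R) := by
  obtain ⟨ε₀, hε₀, hα⟩ := hαsum
  obtain ⟨ε₁, hε₁, hβs⟩ := hβsum
  have hκ1 : 1 ≤ κ := by omega
  refine ⟨aux_convex_Rset κ, ?_⟩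
  intro X hX Y hY a b ha hb hab
  set x : Mat κ := Y with hxdef
  set Q : Mat κ := X - Y with hQdef
  have hseg : ∀ s ∈ Set.Icc (0:ℝ) 1, x + s • Q ∈ Rset κ := by
    intro s hs
    have h1 : (1 - s) + s = 1 := by ring
    have hmem := aux_convex_Rset κ hY hX (by linarith [hs.2] : (0:ℝ) ≤ 1 - s) hs.1 h1
    have hee : x + s • Q = (1-s) • Y + s • X := by
      rw [hxdef, hQdef, smul_sub, sub_smul, one_smul]; abel
    rwa [hee]
  have hL0 : 0 ≤ l1norm Q := aux_l1norm_nonneg Q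
  set ε := min ε₀ ε₁ with hεdef
  have hε : 0 < ε := lt_min hε₀ hε₁
  set r := 1 + ε/2 with hrdef
  have hr1 : 1 ≤ r := by rw [hrdef]; linarith
  have hεle₀ : ε ≤ ε₀ := by rw [hεdef]; exact min_le_left _ _
  have hεle₁ : ε ≤ ε₁ := by rw [hεdef]; exact min_le_right _ _
  have hrε₀ : r < 1 + ε₀ := by rw [hrdef]; linarith
  have hrε₁ : r < 1 + ε₁ := by rw [hrdef]; linarith
  set δ := (ε/2) / (l1norm Q + 1) with hδdef
  have hδ : 0 < δ := by
    rw [hδdef]; apply div_pos; linarith; linarith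
  set I := Set.Ioo (-δ) (1+δ) with hIdef
  have hIopen : IsOpen I := isOpen_Ioo
  have hIccI : Set.Icc (0:ℝ) 1 ⊆ I := by
    intro s hs
    exact ⟨by linarith [hs.1], by linarith [hs.2]⟩
  have hIooI : Set.Ioo (0:ℝ) 1 ⊆ I := fun s hs => hIccI ⟨hs.1.le, hs.2.le⟩
  have hIr : ∀ s ∈ I, l1norm (x + s • Q) ≤ r := by
    intro s hs
    obtain ⟨hs1, hs2⟩ := hs
    set s₀ := max 0 (min 1 s) with hs₀def
    have hs₀Icc : s₀ ∈ Set.Icc (0:ℝ) 1 := by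
      constructor
      · exact le_max_left _ _
      · apply max_le
        · norm_num
        · exact min_le_left _ _
    have hdist : |s - s₀| ≤ δ := by
      rw [abs_le]
      rcases le_total s 0 with h | h
      · have he : s₀ = 0 := by
          rw [hs₀def, min_eq_right (le_trans h zero_le_one), max_eq_left h]
        rw [he]
        constructor <;> [linarith; linarith]
      · rcases le_total s 1 with h2 | h2
        · have he : s₀ = s := by rw [hs₀def, min_eq_right h2, max_eq_right h]
          rw [he]
          constructor <;> [linarith; linarith]
        · have he : s₀ = 1 := by
            rw [hs₀def, min_eq_left h2]
            exact max_eq_right (by norm_num)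
          rw [he]
          constructor <;> [linarith; linarith]
    have hsplit : x + s • Q = (x + s₀ • Q) + (s - s₀) • Q := by
      rw [sub_smul]; abel
    rw [hsplit]
    have hδl : δ * (l1norm Q + 1) = ε/2 := by
      rw [hδdef]; field_simp
    calc l1norm ((x + s₀ • Q) + (s - s₀) • Q)
        ≤ l1norm (x + s₀ • Q) + l1norm ((s - s₀) • Q) := aux_l1norm_add_le _ _
      _ = l1norm (x + s₀ • Q) + |s - s₀| * l1norm Q := by rw [aux_l1norm_smul]
      _ ≤ 1 + δ * l1norm Q := by
          have h1 := (hseg s₀ hs₀Icc).2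
          have h2 : |s-s₀| * l1norm Q ≤ δ * l1norm Q :=
            mul_le_mul_of_nonneg_right hdist hL0
          linarith
      _ ≤ 1 + ε/2 := by nlinarith
      _ = r := by rw [hrdef]
  -- derivative data
  choose A1 A2 hA1 hA2 hAb using fun θ : T => aux_xi_deriv hκ1 θ.1 x Q
  choose B1 B2 hB1 hB2 hBb using fun θ : SpinParamQ κ => aux_xi_deriv hκ1 θ.1 x Q
  set Mc := (κ:ℝ)^2 * l1norm Q with hMcdef
  have hMc0 : 0 ≤ Mc := by rw [hMcdef]; positivity
  set CC := 2 * (1 + Mc)^2 with hCCdef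
  -- majorants
  have hsumA : Summable (fun θ : T => α θ.1 ^2 * ((1 + (θ.1.deg:ℝ))^2 * r ^ θ.1.deg)) :=
    aux_summable_dom (fun θ : T => α θ.1) (fun θ => θ.1.deg) ε₀ r hε₀ hr1 hrε₀ hα
  have hsumB : Summable (fun θ : SpinParamQ κ => β θ ^2 * ((1 + (θ.1.deg:ℝ))^2 * r ^ θ.1.deg)) :=
    aux_summable_dom β (fun θ => θ.1.deg) ε₁ r hε₁ hr1 hrε₁ hβs
  set uA : T → ℝ := fun θ => CC * (α θ.1^2 * ((1 + (θ.1.deg:ℝ))^2 * r ^ θ.1.deg)) with huAdef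
  set uB : SpinParamQ κ → ℝ :=
    fun θ => CC * (β θ^2 * ((1 + (θ.1.deg:ℝ))^2 * r ^ θ.1.deg)) with huBdef
  have huA : Summable uA := hsumA.mul_left CC
  have huB : Summable uB := hsumB.mul_left CC
  have hubA : ∀ (θ : T), ∀ s ∈ I, |α θ.1^2 * xiTheta θ.1 (x + s • Q)| ≤ uA θ ∧
      |α θ.1^2 * A1 θ s| ≤ uA θ ∧ |α θ.1^2 * A2 θ s| ≤ uA θ := by
    intro θ s hs
    obtain ⟨c0, c1, c2⟩ := hAb θ r hr1 s (hIr s hs)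
    obtain ⟨e0, e1, e2⟩ := aux_arith (θ.1.deg:ℝ) Mc (r ^ θ.1.deg) (by positivity) hMc0
      (by positivity)
    have hsq : (0:ℝ) ≤ α θ.1^2 := sq_nonneg _
    refine ⟨?_, ?_, ?_⟩
    · calc |α θ.1^2 * xiTheta θ.1 (x + s • Q)| = α θ.1^2 * |xiTheta θ.1 (x + s • Q)| := by
            rw [abs_mul, abs_of_nonneg hsq]
        _ ≤ α θ.1^2 * (CC * ((1 + (θ.1.deg:ℝ))^2 * r ^ θ.1.deg)) :=
            mul_le_mul_of_nonneg_left (c0.trans e0) hsq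
        _ = uA θ := by rw [huAdef]; ring
    · calc |α θ.1^2 * A1 θ s| = α θ.1^2 * |A1 θ s| := by rw [abs_mul, abs_of_nonneg hsq]
        _ ≤ α θ.1^2 * (CC * ((1 + (θ.1.deg:ℝ))^2 * r ^ θ.1.deg)) :=
            mul_le_mul_of_nonneg_left (c1.trans e1) hsq
        _ = uA θ := by rw [huAdef]; ring
    · calc |α θ.1^2 * A2 θ s| = α θ.1^2 * |A2 θ s| := by rw [abs_mul, abs_of_nonneg hsq]
        _ ≤ α θ.1^2 * (CC * ((1 + (θ.1.deg:ℝ))^2 * r ^ θ.1.deg)) :=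
            mul_le_mul_of_nonneg_left (c2.trans e2) hsq
        _ = uA θ := by rw [huAdef]; ring
  have hubB : ∀ (θ : SpinParamQ κ), ∀ s ∈ I, |β θ^2 * xiTheta θ.1 (x + s • Q)| ≤ uB θ ∧
      |β θ^2 * B1 θ s| ≤ uB θ ∧ |β θ^2 * B2 θ s| ≤ uB θ := by
    intro θ s hs
    obtain ⟨c0, c1, c2⟩ := hBb θ r hr1 s (hIr s hs)
    obtain ⟨e0, e1, e2⟩ := aux_arith (θ.1.deg:ℝ) Mc (r ^ θ.1.deg) (by positivity) hMc0
      (by positivity)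
    have hsq : (0:ℝ) ≤ β θ^2 := sq_nonneg _
    refine ⟨?_, ?_, ?_⟩
    · calc |β θ^2 * xiTheta θ.1 (x + s • Q)| = β θ^2 * |xiTheta θ.1 (x + s • Q)| := by
            rw [abs_mul, abs_of_nonneg hsq]
        _ ≤ β θ^2 * (CC * ((1 + (θ.1.deg:ℝ))^2 * r ^ θ.1.deg)) :=
            mul_le_mul_of_nonneg_left (c0.trans e0) hsq
        _ = uB θ := by rw [huBdef]; ring
    · calc |β θ^2 * B1 θ s| = β θ^2 * |B1 θ s| := by rw [abs_mul, abs_of_nonneg hsq]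
        _ ≤ β θ^2 * (CC * ((1 + (θ.1.deg:ℝ))^2 * r ^ θ.1.deg)) :=
            mul_le_mul_of_nonneg_left (c1.trans e1) hsq
        _ = uB θ := by rw [huBdef]; ring
    · calc |β θ^2 * B2 θ s| = β θ^2 * |B2 θ s| := by rw [abs_mul, abs_of_nonneg hsq]
        _ ≤ β θ^2 * (CC * ((1 + (θ.1.deg:ℝ))^2 * r ^ θ.1.deg)) :=
            mul_le_mul_of_nonneg_left (c2.trans e2) hsq
        _ = uB θ := by rw [huBdef]; ring
  -- tsum functions
  set Φ : ℝ → ℝ := fun s => ∑' θ : T, α θ.1^2 * xiTheta θ.1 (x + s • Q) with hΦdef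
  set Φ1 : ℝ → ℝ := fun s => ∑' θ : T, α θ.1^2 * A1 θ s with hΦ1def
  set Φ2 : ℝ → ℝ := fun s => ∑' θ : T, α θ.1^2 * A2 θ s with hΦ2def
  set Ψ : ℝ → ℝ := fun s => ∑' θ : SpinParamQ κ, β θ^2 * xiTheta θ.1 (x + s • Q) with hΨdef
  set Ψ1 : ℝ → ℝ := fun s => ∑' θ : SpinParamQ κ, β θ^2 * B1 θ s with hΨ1def
  set Ψ2 : ℝ → ℝ := fun s => ∑' θ : SpinParamQ κ, β θ^2 * B2 θ s with hΨ2def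
  have hsum0A : ∀ s ∈ I, Summable fun θ : T => α θ.1^2 * xiTheta θ.1 (x + s • Q) := by
    intro s hs
    exact Summable.of_abs (Summable.of_nonneg_of_le (fun θ => abs_nonneg _)
      (fun θ => (hubA θ s hs).1) huA)
  have hsum1A : ∀ s ∈ I, Summable fun θ : T => α θ.1^2 * A1 θ s := by
    intro s hs
    exact Summable.of_abs (Summable.of_nonneg_of_le (fun θ => abs_nonneg _)
      (fun θ => (hubA θ s hs).2.1) huA)
  have hsum0B : ∀ s ∈ I, Summable fun θ : SpinParamQ κ => β θ^2 * xiTheta θ.1 (x + s • Q) := by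
    intro s hs
    exact Summable.of_abs (Summable.of_nonneg_of_le (fun θ => abs_nonneg _)
      (fun θ => (hubB θ s hs).1) huB)
  have hsum1B : ∀ s ∈ I, Summable fun θ : SpinParamQ κ => β θ^2 * B1 θ s := by
    intro s hs
    exact Summable.of_abs (Summable.of_nonneg_of_le (fun θ => abs_nonneg _)
      (fun θ => (hubB θ s hs).2.1) huB)
  have hsum2B : ∀ s ∈ I, Summable fun θ : SpinParamQ κ => β θ^2 * B2 θ s := by
    intro s hs
    exact Summable.of_abs (Summable.of_nonneg_of_le (fun θ => abs_nonneg _)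
      (fun θ => (hubB θ s hs).2.2) huB)
  have hΦ1h : ∀ s ∈ I, HasDerivAt Φ (Φ1 s) s :=
    aux_tsum_hasDerivAt I hIopen _ _ uA huA
      (fun θ s => (hA1 θ s).const_mul (α θ.1^2))
      (fun θ s hs => (hubA θ s hs).2.1) hsum0A
  have hΦ2h : ∀ s ∈ I, HasDerivAt Φ1 (Φ2 s) s :=
    aux_tsum_hasDerivAt I hIopen _ _ uA huA
      (fun θ s => (hA2 θ s).const_mul (α θ.1^2))
      (fun θ s hs => (hubA θ s hs).2.2) hsum1A
  have hΨ1h : ∀ s ∈ I, HasDerivAt Ψ (Ψ1 s) s :=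
    aux_tsum_hasDerivAt I hIopen _ _ uB huB
      (fun θ s => (hB1 θ s).const_mul (β θ^2))
      (fun θ s hs => (hubB θ s hs).2.1) hsum0B
  have hΨ2h : ∀ s ∈ I, HasDerivAt Ψ1 (Ψ2 s) s :=
    aux_tsum_hasDerivAt I hIopen _ _ uB huB
      (fun θ s => (hB2 θ s).const_mul (β θ^2))
      (fun θ s hs => (hubB θ s hs).2.2) hsum1B
  set G : ℝ → ℝ := fun s => Φ s + Ψ s with hGdef
  have hG1 : ∀ s ∈ I, HasDerivAt G (Φ1 s + Ψ1 s) s := fun s hs =>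
    (hΦ1h s hs).add (hΨ1h s hs)
  have hdG : Set.EqOn (deriv G) (fun s => Φ1 s + Ψ1 s) I := fun s hs => (hG1 s hs).deriv
  have hdΦ : Set.EqOn (deriv Φ) Φ1 I := fun s hs => (hΦ1h s hs).deriv
  have hG2 : ∀ s ∈ I, DifferentiableAt ℝ (deriv G) s ∧
      deriv (deriv G) s = Φ2 s + Ψ2 s := by
    intro s hs
    have hd : HasDerivAt (fun u => Φ1 u + Ψ1 u) (Φ2 s + Ψ2 s) s :=
      (hΦ2h s hs).add (hΨ2h s hs)
    have hev : deriv G =ᶠ[nhds s] (fun u => Φ1 u + Ψ1 u) :=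
      Filter.eventuallyEq_of_mem (hIopen.mem_nhds hs) hdG
    constructor
    · exact hd.differentiableAt.congr_of_eventuallyEq hev
    · rw [hev.deriv_eq, hd.deriv]
  -- strong convexity of Φ part
  have hstrongΦ : ∀ s ∈ Set.Ioo (0:ℝ) 1, c * frobSq Q ≤ Φ2 s := by
    intro s hs
    have hz : x + s • Q ∈ Rset κ := hseg s ⟨hs.1.le, hs.2.le⟩
    have h1 := hstrong _ hz Q
    have hfun : (fun u : ℝ => ξ ((x + s • Q) + u • Q))
        = (fun u => (fun v => ξ (x + v • Q)) (s + u)) := by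
      funext u
      congr 1
      rw [add_smul]; abel
    have h2 : hessQuad ξ (x + s • Q) Q = deriv (deriv (fun v => ξ (x + v • Q))) s := by
      unfold hessQuad
      rw [hfun]
      exact aux_deriv2_shift (fun v => ξ (x + v • Q)) s
    have heqOn : Set.EqOn (fun v => ξ (x + v • Q)) Φ (Set.Ioo (0:ℝ) 1) := by
      intro v hv
      have hzv := hseg v ⟨hv.1.le, hv.2.le⟩
      exact hrep _ hzv.2
    have h3 : deriv (deriv (fun v => ξ (x + v • Q))) s = deriv (deriv Φ) s :=
      aux_deriv2_congr _ _ _ isOpen_Ioo heqOn s hs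
    have h4 : deriv (deriv Φ) s = Φ2 s := by
      have hev : deriv Φ =ᶠ[nhds s] Φ1 :=
        Filter.eventuallyEq_of_mem (hIopen.mem_nhds (hIooI hs)) hdΦ
      rw [hev.deriv_eq]
      exact (hΦ2h s (hIooI hs)).deriv
    rw [h2, h3, h4] at h1
    exact h1
  -- lower bound on Ψ part
  have hΨ2lb : ∀ s ∈ Set.Ioo (0:ℝ) 1,
      -((∑' θ : SpinParamQ κ, β θ^2 * Ctheta θ.1) * frobSq Q) ≤ Ψ2 s := by
    intro s hs
    have hsI := hIooI hs
    have hzl1 : l1norm (x + s • Q) ≤ 1 := (hseg s ⟨hs.1.le, hs.2.le⟩).2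
    have hterm : ∀ θ : SpinParamQ κ, -(β θ^2 * Ctheta θ.1 * frobSq Q) ≤ β θ^2 * B2 θ s := by
      intro θ
      have hfun : (fun u : ℝ => xiTheta θ.1 ((x + s • Q) + u • Q))
          = fun u => (fun v => xiTheta θ.1 (x + v • Q)) (s + u) := by
        funext u
        congr 1
        rw [add_smul]; abel
      have hBeq : hessQuad (xiTheta θ.1) (x + s • Q) Q = B2 θ s := by
        unfold hessQuad
        rw [hfun, aux_deriv2_shift (fun v => xiTheta θ.1 (x + v • Q)) s]
        have hd1 : deriv (fun v => xiTheta θ.1 (x + v • Q)) = B1 θ :=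
          funext fun v => (hB1 θ v).deriv
        rw [hd1]
        exact (hB2 θ s).deriv
      have habs := aux_hess_le_Ctheta hκ1 θ.1 _ hzl1 Q
      rw [hBeq] at habs
      have h1 : -(Ctheta θ.1 * frobSq Q) ≤ B2 θ s := neg_le_of_abs_le habs
      have h2 : (0:ℝ) ≤ β θ^2 := sq_nonneg _
      have h3 := mul_le_mul_of_nonneg_left h1 h2
      nlinarith [h3]
    have hsumL : Summable fun θ : SpinParamQ κ => -(β θ^2 * Ctheta θ.1 * frobSq Q) :=
      (hβC.mul_right (frobSq Q)).neg
    have hts := Summable.tsum_le_tsum hterm hsumL (hsum2B s hsI)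
    rwa [tsum_neg, tsum_mul_right] at hts
  -- convexity of G on [0,1]
  have hpos : ∀ s ∈ interior (Set.Icc (0:ℝ) 1), 0 ≤ deriv^[2] G s := by
    intro s hs
    rw [interior_Icc] at hs
    have hit : deriv^[2] G s = deriv (deriv G) s := rfl
    rw [hit, (hG2 s (hIooI hs)).2]
    have hge := hstrongΦ s hs
    have hΨl := hΨ2lb s hs
    have hF := aux_frobSq_nonneg Q
    have hcc := mul_le_mul_of_nonneg_right (le_of_lt hβCc) hF
    linarith
  have hGC : ConvexOn ℝ (Set.Icc (0:ℝ) 1) G := by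
    apply convexOn_of_deriv2_nonneg (convex_Icc 0 1)
    · intro s hs
      exact ((hG1 s (hIccI hs)).differentiableAt.continuousAt).continuousWithinAt
    · intro s hs
      rw [interior_Icc] at hs
      exact ((hG1 s (hIooI hs)).differentiableAt).differentiableWithinAt
    · intro s hs
      rw [interior_Icc] at hs
      exact ((hG2 s (hIooI hs)).1).differentiableWithinAt
    · exact hpos
  -- evaluate
  have hval : ∀ s ∈ Set.Icc (0:ℝ) 1, G s
      = ξ (x + s • Q) + ∑' θ : SpinParamQ κ, β θ^2 * xiTheta θ.1 (x + s • Q) := by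
    intro s hs
    have h0 : G s = Φ s + Ψ s := rfl
    have h1 : Φ s = ξ (x + s • Q) := (hrep _ (hseg s hs).2).symm
    have h2 : Ψ s = ∑' θ : SpinParamQ κ, β θ^2 * xiTheta θ.1 (x + s • Q) := rfl
    rw [h0, h1, h2]
  have h10 := hGC.2 (Set.mem_Icc.mpr ⟨zero_le_one, le_refl (1:ℝ)⟩)
    (Set.mem_Icc.mpr ⟨le_refl (0:ℝ), zero_le_one⟩) ha hb hab
  have ha1 : a • (1:ℝ) + b • (0:ℝ) = a := by simp
  rw [ha1] at h10
  have hXz : x + (1:ℝ) • Q = X := by rw [hxdef, hQdef, one_smul]; abel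
  have hYz : x + (0:ℝ) • Q = Y := by rw [zero_smul, add_zero]
  have hZz : x + a • Q = a • X + b • Y := by
    have hb' : b = 1 - a := by linarith
    rw [hxdef, hQdef, hb', smul_sub, sub_smul, one_smul]; abel
  have haIcc : a ∈ Set.Icc (0:ℝ) 1 := ⟨ha, by linarith⟩
  have e1 := hval a haIcc
  have e2 := hval 1 ⟨zero_le_one, le_refl 1⟩
  have e3 := hval 0 ⟨le_refl 0, zero_le_one⟩
  rw [hZz] at e1
  rw [hXz] at e2
  rw [hYz] at e3
  simp only [smul_eq_mul]
  rw [← e1, ← e2, ← e3] at *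
  simp only [smul_eq_mul] at h10
  calc G a ≤ a * G 1 + b * G 0 := h10
    _ = a * G 1 + b * G 0 := rfl
end

section
/- Let (Ω, F, P) be a probability space and X : Ω → ℝ^{κ×κ} an integrable random matrix. Assume: (i) for every permutation ω of {1,…,κ}, the random matrix ω•X has the same law as X; and (ii) X is measurable with respect to the σ-algebra generated by tr(X). Then almost surely X_{k₁,k₁} = X_{k₂,k₂} for all k₁, k₂ ∈ {1,…,κ}, and X_{k₁,k₁'} = X_{k₂,k₂'} for all k₁ ≠ k₁' and k₂ ≠ k₂'. (This is the mechanism behind the fact that a synchronized overlap array with permutation-symmetric law takes values in the symmetric set Γ*.) -/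
open MeasureTheory

/-- if an integrable random matrix `X` has a permutation-invariant law
(`ω•X ~ X` for all permutations `ω`, where `(ω•R)_{k,k'} = R_{ω⁻¹(k),ω⁻¹(k')}`) and is
measurable with respect to the σ-algebra generated by `tr(X)`, then almost surely the
diagonal entries of `X` all coincide and the off-diagonal entries all coincide. -/
theorem stmt17 (κ : ℕ) (hκ : 2 ≤ κ) (Ω : Type*) [MeasurableSpace Ω]
    (P : Measure Ω) [IsProbabilityMeasure P]
    (X : Ω → Mat κ)
    (hXmeas : ∀ k k', Measurable fun a => X a k k')
    (hXint : ∀ k k', Integrable (fun a => X a k k') P)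
    (hlaw : ∀ ω : Equiv.Perm (Fin κ),
      Measure.map (fun a => fun k k' : Fin κ => X a (ω⁻¹ k) (ω⁻¹ k')) P
        = Measure.map (fun a => fun k k' : Fin κ => X a k k') P)
    (hsync : ∀ k k',
      Measurable[MeasurableSpace.comap (fun a => ∑ i, X a i i) inferInstance]
        fun a => X a k k') :
    ∀ᵐ a ∂P,
      (∀ k₁ k₂, X a k₁ k₁ = X a k₂ k₂) ∧
      ∀ k₁ k₁' k₂ k₂', k₁ ≠ k₁' → k₂ ≠ k₂' → X a k₁ k₁' = X a k₂ k₂' := by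
  classical
  set T : Ω → ℝ := fun a => ∑ i, X a i i with hTdef
  have hTmeas : Measurable T := Finset.measurable_sum _ fun i _ => hXmeas i i
  have hm : MeasurableSpace.comap T inferInstance ≤ ‹MeasurableSpace Ω› := hTmeas.comap_le
  have hYmeas : Measurable (fun a => fun k k' : Fin κ => X a k k') :=
    measurable_pi_lambda _ fun k => measurable_pi_lambda _ fun k' => hXmeas k k'
  -- key step: entries related by a permutation agree a.s.
  have key : ∀ (ω : Equiv.Perm (Fin κ)) (k k' : Fin κ),
      (fun a => X a k k') =ᵐ[P] fun a => X a (ω⁻¹ k) (ω⁻¹ k') := by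
    intro ω k k'
    -- set-integral identity on comap-measurable sets
    have hseteq : ∀ s : Set Ω, MeasurableSet[MeasurableSpace.comap T inferInstance] s →
        P s < (⊤ : ENNReal) → ∫ a in s, X a k k' ∂P = ∫ a in s, X a (ω⁻¹ k) (ω⁻¹ k') ∂P := by
      rintro s ⟨B, hB, rfl⟩ -
      have hYω : Measurable fun a => fun i i' : Fin κ => X a (ω⁻¹ i) (ω⁻¹ i') :=
        measurable_pi_lambda _ fun i => measurable_pi_lambda _ fun i' => hXmeas _ _
      set s' : Set (Fin κ → Fin κ → ℝ) := {M | (∑ i, M i i) ∈ B} with hs'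
      have htrM : Measurable fun M : Fin κ → Fin κ → ℝ => ∑ i, M i i :=
        Finset.measurable_sum _ fun i _ => (measurable_pi_apply i).comp (measurable_pi_apply i)
      have hs'meas : MeasurableSet s' := htrM hB
      have hgmeas : Measurable fun M : Fin κ → Fin κ → ℝ => M k k' :=
        (measurable_pi_apply k').comp (measurable_pi_apply k)
      have e1 : ∫ M in s', M k k' ∂(Measure.map (fun a => fun k k' : Fin κ => X a k k') P)
          = ∫ a in T ⁻¹' B, X a k k' ∂P := by
        rw [setIntegral_map hs'meas hgmeas.aestronglyMeasurable hYmeas.aemeasurable]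
        rfl
      have hpre : (fun a => fun i i' : Fin κ => X a (ω⁻¹ i) (ω⁻¹ i')) ⁻¹' s'
          = T ⁻¹' B := by
        ext a
        simp only [Set.mem_preimage, hs', Set.mem_setOf_eq, hTdef]
        rw [Equiv.sum_comp ω⁻¹ (fun i => X a i i)]
      have e2 : ∫ M in s', M k k' ∂(Measure.map (fun a => fun k k' : Fin κ => X a k k') P)
          = ∫ a in T ⁻¹' B, X a (ω⁻¹ k) (ω⁻¹ k') ∂P := by
        rw [← hlaw ω, setIntegral_map hs'meas hgmeas.aestronglyMeasurable hYω.aemeasurable,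
          hpre]
      rw [← e1, e2]
    have hfm : AEStronglyMeasurable[MeasurableSpace.comap T inferInstance]
        (fun a => X a k k') P :=
      StronglyMeasurable.aestronglyMeasurable (hsync k k').stronglyMeasurable
    have hgm : AEStronglyMeasurable[MeasurableSpace.comap T inferInstance]
        (fun a => X a (ω⁻¹ k) (ω⁻¹ k')) P :=
      StronglyMeasurable.aestronglyMeasurable (hsync _ _).stronglyMeasurable
    exact ae_eq_of_forall_setIntegral_eq_of_sigmaFinite' hm
      (fun s _ _ => (hXint k k').integrableOn)
      (fun s _ _ => (hXint _ _).integrableOn) hseteq hfm hgm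
  -- diagonal part
  have hdiag : ∀ᵐ a ∂P, ∀ k₁ k₂, X a k₁ k₁ = X a k₂ k₂ := by
    rw [ae_all_iff]; intro k₁; rw [ae_all_iff]; intro k₂
    filter_upwards [key (Equiv.swap k₁ k₂) k₁ k₁] with a ha
    simpa [Equiv.swap_inv, Equiv.swap_apply_left] using ha
  -- off-diagonal part
  have hoff : ∀ᵐ a ∂P, ∀ k₁ k₁' k₂ k₂', k₁ ≠ k₁' → k₂ ≠ k₂' → X a k₁ k₁' = X a k₂ k₂' := by
    rw [ae_all_iff]; intro k₁; rw [ae_all_iff]; intro k₁'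
    rw [ae_all_iff]; intro k₂; rw [ae_all_iff]; intro k₂'
    by_cases h1 : k₁ = k₁'
    · filter_upwards with a h h'; exact absurd h1 h
    by_cases h2 : k₂ = k₂'
    · filter_upwards with a h h'; exact absurd h2 h'
    -- build a permutation σ with σ k₂ = k₁ and σ k₂' = k₁'
    set τ : Equiv.Perm (Fin κ) := Equiv.swap k₂ k₁ with hτ
    set c : Fin κ := τ k₁' with hc
    have hk₂c : k₂ ≠ c := by
      intro h
      have : τ k₁ = τ k₁' := by rw [← hc, ← h, hτ, Equiv.swap_apply_right]
      exact h1 (τ.injective this)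
    set σ : Equiv.Perm (Fin κ) := τ * Equiv.swap k₂' c with hσ
    have hσ₂ : σ k₂ = k₁ := by
      rw [hσ, Equiv.Perm.mul_apply, Equiv.swap_apply_of_ne_of_ne h2 hk₂c, hτ,
        Equiv.swap_apply_left]
    have hσ₂' : σ k₂' = k₁' := by
      rw [hσ, Equiv.Perm.mul_apply, Equiv.swap_apply_left, hc, hτ, Equiv.swap_apply_self]
    have hinv : σ⁻¹ k₁ = k₂ := by rw [← hσ₂, Equiv.Perm.inv_def, Equiv.symm_apply_apply]
    have hinv' : σ⁻¹ k₁' = k₂' := by rw [← hσ₂', Equiv.Perm.inv_def, Equiv.symm_apply_apply]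
    filter_upwards [key σ k₁ k₁'] with a ha _ _
    rw [ha, hinv, hinv']
  filter_upwards [hdiag, hoff] with a h1 h2
  exact ⟨h1, h2⟩
end
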